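/- arXiv:1206.3390 — 5 statements merged into one kernel-verified Lean document; each statement's English description precedes it below -/
import Mathlib

section
/- There exists a constant c>0 (depending only on F, α and κ, not on n) such that for every ε>0 there is N∈ℕ with the following property: for all n≥N, ∫_{(-∞,x_n]} e^{φ_n x} dF(x) ≤ 1 + c·φ_n^κ + e^{2α}·F̄(2α/φ_n) + (1+ε)·e^{φ_n x_n}·F̄(x_n). -/
set_option linter.unusedSectionVars false
set_option linter.unusedVariables false
set_option maxHeartbeats 2000000

open MeasureTheory ProbabilityTheory Filter

noncomputable section

/-- Right tail `F̄(x) = F((x,∞))` of a measure on `ℝ`, as a real number. -/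
def rtail (F : Measure ℝ) (x : ℝ) : ℝ := (F (Set.Ioi x)).toReal

/-- `L` is slowly varying at infinity. -/
def SlowlyVarying (L : ℝ → ℝ) : Prop :=
  ∀ t > 0, Tendsto (fun x => L (t * x) / L x) atTop (nhds 1)

lemma exp_le_one_add_mul_exp {u : ℝ} : Real.exp u * (1 - u) ≤ 1 := by
  have h1 : -u + 1 ≤ Real.exp (-u) := Real.add_one_le_exp _
  have h2 : Real.exp (-u) * Real.exp u = 1 := by rw [← Real.exp_add]; simp
  nlinarith [Real.exp_pos u, Real.exp_pos (-u)]

lemma exp_helper1 {u M κ : ℝ} (h0 : 0 ≤ u) (hM : u ≤ M) (hM1 : 1 ≤ M)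
    (hκ0 : 0 < κ) (hκ1 : κ ≤ 1) : Real.exp u ≤ 1 + (M * Real.exp M) * u ^ κ := by
  rcases eq_or_lt_of_le h0 with h | h
  · rw [← h, Real.exp_zero, Real.zero_rpow (ne_of_gt hκ0)]
    norm_num
  · -- u > 0
    have hu1 : Real.exp u ≤ 1 + u * Real.exp u := by nlinarith [exp_le_one_add_mul_exp (u := u)]
    have hexp : Real.exp u ≤ Real.exp M := Real.exp_le_exp.2 hM
    have hMpos : (0:ℝ) < M := lt_of_lt_of_le one_pos hM1
    -- u ≤ M * u^κ
    have hdiv : u / M ≤ 1 := (div_le_one hMpos).2 hM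
    have hdivpos : 0 < u / M := div_pos h hMpos
    have h3 : (u / M) ^ (1:ℝ) ≤ (u / M) ^ κ :=
      Real.rpow_le_rpow_of_exponent_ge hdivpos hdiv hκ1
    rw [Real.rpow_one, Real.div_rpow (le_of_lt h) (le_of_lt hMpos)] at h3
    have hMκ : (1:ℝ) ≤ M ^ κ := Real.one_le_rpow hM1 (le_of_lt hκ0)
    have h4 : u ≤ M * u ^ κ := by
      have := (div_le_div_iff₀ hMpos (by positivity : (0:ℝ) < M ^ κ)).1 h3
      calc u ≤ u * M ^ κ := le_mul_of_one_le_right (le_of_lt h) hMκ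
        _ ≤ u ^ κ * M := by nlinarith
        _ = M * u ^ κ := by ring
    calc Real.exp u ≤ 1 + u * Real.exp u := hu1
      _ ≤ 1 + u * Real.exp M := by nlinarith
      _ ≤ 1 + (M * u ^ κ) * Real.exp M := by nlinarith [Real.exp_pos M]
      _ = 1 + (M * Real.exp M) * u ^ κ := by ring

lemma exp_helper2 {u M κ : ℝ} (hM : u ≤ M) (hM1 : 1 ≤ M)
    (hκ1 : 1 ≤ κ) (hκ2 : κ ≤ 2) :
    Real.exp u ≤ 1 + u + (Real.exp M * (1 + M^2) + 1) * |u| ^ κ := by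
  have hC1 : (1:ℝ) ≤ Real.exp M * (1 + M^2) + 1 := by nlinarith [Real.exp_pos M]
  rcases lt_or_ge u (-1) with h | h
  · -- u < -1 : exp u ≤ 1 and |u|^κ ≥ |u| = -u
    have h1 : Real.exp u ≤ 1 := Real.exp_le_one_iff.2 (by linarith)
    have habs : (1:ℝ) ≤ |u| := by rw [abs_of_neg (by linarith)]; linarith
    have h2 : |u| ^ (1:ℝ) ≤ |u| ^ κ := Real.rpow_le_rpow_of_exponent_le habs hκ1
    rw [Real.rpow_one] at h2
    have h3 : -u ≤ |u| ^ κ := le_trans (neg_le_abs u) h2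
    nlinarith [Real.rpow_nonneg (abs_nonneg u) κ]
  · rcases le_or_gt u 0 with h0 | h0
    · -- -1 ≤ u ≤ 0 : exp u ≤ 1 + u + u², u² ≤ |u|^κ
      have key : Real.exp u ≤ 1 + u + u^2 := by
        have h1 : Real.exp u * (1 - u) ≤ 1 := exp_le_one_add_mul_exp
        nlinarith [Real.exp_pos u]
      have habs : |u| ≤ 1 := abs_le.2 ⟨h, by linarith⟩
      have hsq : u^2 ≤ |u| ^ κ := by
        rcases eq_or_lt_of_le (abs_nonneg u) with hz | hz
        · have : u = 0 := abs_eq_zero.1 hz.symm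
          simp [this, Real.rpow_natCast]
          positivity
        · have h2 : |u| ^ (2:ℝ) ≤ |u| ^ κ := Real.rpow_le_rpow_of_exponent_ge hz habs hκ2
          calc u^2 = |u| ^ (2:ℝ) := by
                rw [show ((2:ℝ)) = ((2:ℕ):ℝ) by norm_num, Real.rpow_natCast, sq_abs]
            _ ≤ |u| ^ κ := h2
      nlinarith [Real.rpow_nonneg (abs_nonneg u) κ]
    · -- 0 < u ≤ M : exp u ≤ 1 + u + u² e^M, u² ≤ (1+M²)|u|^κ
      have h1 : Real.exp u ≤ 1 + u * Real.exp u := by nlinarith [exp_le_one_add_mul_exp (u := u)]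
      have hexp : Real.exp u ≤ Real.exp M := Real.exp_le_exp.2 hM
      have key : Real.exp u ≤ 1 + u + u^2 * Real.exp M := by nlinarith [Real.exp_pos u]
      have habs : |u| = u := abs_of_pos h0
      have hsq : u^2 ≤ (1 + M^2) * |u| ^ κ := by
        rcases le_or_gt u 1 with hu1 | hu1
        · have h2 : |u| ^ (2:ℝ) ≤ |u| ^ κ :=
            Real.rpow_le_rpow_of_exponent_ge (by rwa [habs]) (by rwa [habs]) hκ2
          have h3 : u^2 ≤ |u| ^ κ := by
            calc u^2 = |u| ^ (2:ℝ) := by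
                  rw [show ((2:ℝ)) = ((2:ℕ):ℝ) by norm_num, Real.rpow_natCast, sq_abs]
              _ ≤ |u| ^ κ := h2
          nlinarith [Real.rpow_nonneg (abs_nonneg u) κ, mul_nonneg (sq_nonneg M) (Real.rpow_nonneg (abs_nonneg u) κ)]
        · have h2 : (1:ℝ) ≤ |u| ^ κ := Real.one_le_rpow (by rw [habs]; linarith) (by linarith)
          nlinarith [Real.rpow_nonneg (abs_nonneg u) κ]
      nlinarith [Real.exp_pos M, Real.rpow_nonneg (abs_nonneg u) κ]

lemma pow_clog_le {z : ℝ} (hz : 1 ≤ z) : (2:ℝ) ^ (Nat.clog 2 ⌈z⌉₊) ≤ 4 * z := by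
  set n := ⌈z⌉₊ with hn
  rcases le_or_gt n 1 with h | h
  · rw [Nat.clog_of_right_le_one h]
    norm_num; linarith
  · have hK : 0 < Nat.clog 2 n := Nat.clog_pos one_lt_two h
    have h1 : (2:ℕ) ^ (Nat.clog 2 n).pred < n := Nat.pow_pred_clog_lt_self one_lt_two h
    have h2 : (2:ℕ) ^ (Nat.clog 2 n) = 2 * 2 ^ (Nat.clog 2 n).pred := by
      conv_lhs => rw [← Nat.succ_pred_eq_of_pos hK]
      rw [pow_succ]; ring
    have h3 : (2:ℕ) ^ (Nat.clog 2 n) < 2 * n := by omega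
    have h4 : ((2:ℕ) ^ (Nat.clog 2 n) : ℝ) < 2 * n := by exact_mod_cast h3
    have h5 : (n:ℝ) < z + 1 := Nat.ceil_lt_add_one (by linarith)
    have : ((2:ℕ)^(Nat.clog 2 n) : ℝ) = (2:ℝ) ^ (Nat.clog 2 n) := by push_cast; ring
    rw [this] at h4
    nlinarith


variable (F : Measure ℝ) [IsProbabilityMeasure F]

lemma rtail_nonneg (y : ℝ) : 0 ≤ rtail F y := ENNReal.toReal_nonneg

lemma rtail_le_one (y : ℝ) : rtail F y ≤ 1 := by
  have h := prob_le_one (μ := F) (s := Set.Ioi y)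
  have := ENNReal.toReal_mono ENNReal.one_ne_top h
  simpa [rtail] using this

lemma rtail_anti {u v : ℝ} (h : u ≤ v) : rtail F v ≤ rtail F u :=
  ENNReal.toReal_mono (measure_ne_top F _) (measure_mono (Set.Ioi_subset_Ioi h))

lemma aux_intOn_exp_Iic (φ b : ℝ) (hφ : 0 ≤ φ) :
    IntegrableOn (fun y => Real.exp (φ*y)) (Set.Iic b) F := by
  refine Integrable.mono' (integrable_const (Real.exp (φ*b))) ?_ ?_
  · exact (Real.continuous_exp.comp (continuous_const.mul continuous_id)).aestronglyMeasurable
  · refine (ae_restrict_iff' measurableSet_Iic).2 (Filter.Eventually.of_forall fun y hy => ?_)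
    rw [Real.norm_eq_abs, abs_of_pos (Real.exp_pos _)]
    exact Real.exp_le_exp.2 (mul_le_mul_of_nonneg_left hy hφ)

lemma setIntegral_exp_Ioc_le (φ u v : ℝ) (hφ : 0 ≤ φ) (huv : u ≤ v) :
    ∫ y in Set.Ioc u v, Real.exp (φ*y) ∂F ≤ Real.exp (φ*v) * rtail F u := by
  have h1 : ∫ y in Set.Ioc u v, Real.exp (φ*y) ∂F ≤ ∫ _y in Set.Ioc u v, Real.exp (φ*v) ∂F := by
    refine setIntegral_mono_on ?_ ?_ measurableSet_Ioc ?_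
    · exact ((aux_intOn_exp_Iic F φ v hφ).mono_set Set.Ioc_subset_Iic_self)
    · exact integrableOn_const
    · intro y hy; exact Real.exp_le_exp.2 (mul_le_mul_of_nonneg_left hy.2 hφ)
  rw [setIntegral_const, smul_eq_mul, mul_comm] at h1
  refine h1.trans (mul_le_mul_of_nonneg_left ?_ (le_of_lt (Real.exp_pos _)))
  exact ENNReal.toReal_mono (measure_ne_top F _) (measure_mono Set.Ioc_subset_Ioi_self)

lemma bulk_rec (φ a' : ℝ) (hφ : 0 ≤ φ) :
    ∀ (k : ℕ) (w : ℝ), 0 < w →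
      ∫ y in Set.Ioc a' w, Real.exp (φ*y) ∂F ≤
        (∑ j ∈ Finset.range k, Real.exp (φ*(w/2^j)) * rtail F (max a' (w/2^(j+1))))
          + ∫ y in Set.Ioc a' (w/2^k), Real.exp (φ*y) ∂F := by
  intro k
  induction k with
  | zero => intro w hw; simp
  | succ k ih =>
    intro w hw
    refine (ih w hw).trans ?_
    rw [Finset.sum_range_succ]
    have hm : (0:ℝ) < w/2^k := by positivity
    have hmm : w/2^(k+1) = (w/2^k)/2 := by rw [pow_succ]; ring
    have hm'le : w/2^(k+1) ≤ w/2^k := by rw [hmm]; linarith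
    have key : ∫ y in Set.Ioc a' (w/2^k), Real.exp (φ*y) ∂F ≤
        Real.exp (φ*(w/2^k)) * rtail F (max a' (w/2^(k+1)))
          + ∫ y in Set.Ioc a' (w/2^(k+1)), Real.exp (φ*y) ∂F := by
      by_cases hc : a' < w/2^k
      · set m := w/2^k with hmdef
        set p := max a' (w/2^(k+1)) with hpdef
        have hp1 : a' ≤ p := le_max_left _ _
        have hp2 : p ≤ m := max_le (le_of_lt hc) hm'le
        have hsplit : Set.Ioc a' m = Set.Ioc a' p ∪ Set.Ioc p m :=
          (Set.Ioc_union_Ioc_eq_Ioc hp1 hp2).symm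
        have hi1 : IntegrableOn (fun y => Real.exp (φ*y)) (Set.Ioc a' p) F :=
          (aux_intOn_exp_Iic F φ m hφ).mono_set
            (Set.Subset.trans (Set.Ioc_subset_Ioc_right hp2) Set.Ioc_subset_Iic_self)
        have hi2 : IntegrableOn (fun y => Real.exp (φ*y)) (Set.Ioc p m) F :=
          (aux_intOn_exp_Iic F φ m hφ).mono_set Set.Ioc_subset_Iic_self
        rw [hsplit, setIntegral_union ((Set.Ioc_disjoint_Ioc_of_le le_rfl)) measurableSet_Ioc hi1 hi2]
        have hb2 : ∫ y in Set.Ioc p m, Real.exp (φ*y) ∂F ≤ Real.exp (φ*m) * rtail F p :=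
          setIntegral_exp_Ioc_le F φ p m hφ hp2
        have hb1 : ∫ y in Set.Ioc a' p, Real.exp (φ*y) ∂F ≤
            ∫ y in Set.Ioc a' (w/2^(k+1)), Real.exp (φ*y) ∂F := by
          by_cases hc2 : a' ≤ w/2^(k+1)
          · rw [hpdef, max_eq_right hc2]
          · rw [hpdef, max_eq_left (le_of_not_ge hc2), Set.Ioc_self]
            simp only [Measure.restrict_empty, integral_zero_measure]
            exact setIntegral_nonneg measurableSet_Ioc (fun y _ => le_of_lt (Real.exp_pos _))
        linarith
      · rw [Set.Ioc_eq_empty hc]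
        simp only [Measure.restrict_empty, integral_zero_measure]
        have h1 : 0 ≤ Real.exp (φ*(w/2^k)) * rtail F (max a' (w/2^(k+1))) :=
          mul_nonneg (le_of_lt (Real.exp_pos _)) (rtail_nonneg F _)
        have h2 : 0 ≤ ∫ y in Set.Ioc a' (w/2^(k+1)), Real.exp (φ*y) ∂F :=
          setIntegral_nonneg measurableSet_Ioc (fun y _ => le_of_lt (Real.exp_pos _))
        linarith
    linarith


lemma rtail_anti' {u v : ℝ} (h : u ≤ v) : rtail F v ≤ rtail F u :=
  ENNReal.toReal_mono (measure_ne_top F _) (measure_mono (Set.Ioi_subset_Ioi h))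

lemma rtail_nonneg' (y : ℝ) : 0 ≤ rtail F y := ENNReal.toReal_nonneg

lemma rtail_doubling (α : ℝ) (L : ℝ → ℝ) (hLpos : ∀ x > 0, 0 < L x)
    (hL : SlowlyVarying L) (htail : ∀ x > 0, rtail F x = L x * x ^ (-α)) :
    ∃ X₁ : ℝ, 1 ≤ X₁ ∧ ∀ z, X₁ ≤ z → rtail F (z/2) ≤ 2^(α+1) * rtail F z := by
  have h2 := hL (1/2) (by norm_num)
  have hev : ∀ᶠ z in atTop, L ((1/2) * z) / L z ≤ 2 :=
    h2.eventually_le_const (by norm_num)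
  obtain ⟨X₀, hX₀⟩ := eventually_atTop.1 hev
  refine ⟨max X₀ 1, le_max_right _ _, fun z hz => ?_⟩
  have hz1 : (1:ℝ) ≤ z := le_trans (le_max_right _ _) hz
  have hz0 : (0:ℝ) < z := lt_of_lt_of_le one_pos hz1
  have hz2 : (0:ℝ) < z/2 := by linarith
  have hLz : 0 < L z := hLpos z hz0
  have hd : L ((1/2) * z) / L z ≤ 2 := hX₀ z (le_trans (le_max_left _ _) hz)
  have hL2 : L (z/2) ≤ 2 * L z := by
    have := (div_le_iff₀ hLz).1 hd
    have hr : (1/2) * z = z/2 := by ring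
    rw [hr] at this; linarith
  have ht1 : rtail F (z/2) = L (z/2) * (z/2) ^ (-α) := htail _ hz2
  have ht2 : rtail F z = L z * z ^ (-α) := htail _ hz0
  have hrw : (z/2 : ℝ) ^ (-α) = z ^ (-α) * 2 ^ α := by
    have : (z/2 : ℝ) = z * 2⁻¹ := by ring
    rw [this, Real.mul_rpow (le_of_lt hz0) (by norm_num),
      Real.inv_rpow (by norm_num), ← Real.rpow_neg (by norm_num), neg_neg]
  have h2a : (2:ℝ)^(α+1) = 2^α * 2 := Real.rpow_add_one (by norm_num) α
  have hzα : (0:ℝ) ≤ z ^ (-α) := Real.rpow_nonneg (le_of_lt hz0) _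
  have h2α : (0:ℝ) < (2:ℝ) ^ α := Real.rpow_pos_of_pos (by norm_num) _
  rw [ht1, ht2, hrw, h2a]
  have hLz2 : 0 ≤ L (z/2) := le_of_lt (hLpos _ hz2)
  nlinarith [mul_le_mul_of_nonneg_right hL2 (mul_nonneg hzα (le_of_lt h2α))]

lemma rtail_iter (X₁ D : ℝ) (hX₁ : 1 ≤ X₁) (hD : 0 ≤ D)
    (hdbl : ∀ z, X₁ ≤ z → rtail F (z/2) ≤ D * rtail F z) :
    ∀ (k : ℕ) (u : ℝ), X₁ ≤ u → rtail F u ≤ D^k * rtail F (2^k * u) := by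
  intro k
  induction k with
  | zero => intro u hu; simp
  | succ k ih =>
    intro u hu
    have hu0 : (0:ℝ) < u := lt_of_lt_of_le (lt_of_lt_of_le one_pos hX₁) hu
    have h2u : X₁ ≤ 2*u := by linarith
    have h1 : rtail F u ≤ D * rtail F (2*u) := by
      have := hdbl (2*u) h2u
      have hr : (2*u)/2 = u := by ring
      rwa [hr] at this
    have h2 : rtail F (2*u) ≤ D^k * rtail F (2^k * (2*u)) := ih (2*u) h2u
    have hr2 : (2:ℝ)^k * (2*u) = 2^(k+1) * u := by ring
    rw [hr2] at h2
    calc rtail F u ≤ D * rtail F (2*u) := h1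
      _ ≤ D * (D^k * rtail F (2^(k+1) * u)) := mul_le_mul_of_nonneg_left h2 hD
      _ = D^(k+1) * rtail F (2^(k+1) * u) := by ring

lemma rtail_potter (α : ℝ) (hα : 1 < α) (L : ℝ → ℝ) (hLpos : ∀ x > 0, 0 < L x)
    (hL : SlowlyVarying L) (htail : ∀ x > 0, rtail F x = L x * x ^ (-α)) :
    ∃ X₁ : ℝ, 1 ≤ X₁ ∧ ∀ u v : ℝ, X₁ ≤ u → u ≤ v →
      rtail F u ≤ 4^(α+1) * (v/u)^(α+1) * rtail F v := by
  obtain ⟨X₁, hX₁, hdbl⟩ := rtail_doubling F α L hLpos hL htail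
  have hD : (0:ℝ) ≤ 2^(α+1) := le_of_lt (Real.rpow_pos_of_pos (by norm_num) _)
  refine ⟨X₁, hX₁, fun u v hu huv => ?_⟩
  have hu0 : (0:ℝ) < u := lt_of_lt_of_le (lt_of_lt_of_le one_pos hX₁) hu
  have hvu1 : (1:ℝ) ≤ v/u := (one_le_div hu0).2 huv
  set k := Nat.clog 2 ⌈v/u⌉₊ with hk
  have h2k : v/u ≤ (2:ℝ)^k := by
    have h1 : (⌈v/u⌉₊ : ℕ) ≤ 2^k := Nat.le_pow_clog one_lt_two _
    have h2 : ((⌈v/u⌉₊ : ℕ) : ℝ) ≤ ((2^k : ℕ) : ℝ) := by exact_mod_cast h1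
    have h3 : v/u ≤ (⌈v/u⌉₊ : ℝ) := Nat.le_ceil _
    have h4 : ((2^k : ℕ):ℝ) = (2:ℝ)^k := by push_cast; ring
    linarith [h4 ▸ h2]
  have hvle : v ≤ 2^k * u := by
    have := (div_le_iff₀ hu0).1 h2k
    linarith
  have hiter := rtail_iter F X₁ (2^(α+1)) hX₁ hD hdbl k u hu
  have hanti : rtail F (2^k * u) ≤ rtail F v := rtail_anti' F hvle
  have hDk : ((2:ℝ)^(α+1))^k = ((2:ℝ)^k)^(α+1) := by
    rw [← Real.rpow_natCast ((2:ℝ)^(α+1)) k, ← Real.rpow_natCast (2:ℝ) k,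
      ← Real.rpow_mul (by norm_num : (0:ℝ) ≤ 2), ← Real.rpow_mul (by norm_num : (0:ℝ) ≤ 2),
      mul_comm]
  have hclog : (2:ℝ)^k ≤ 4 * (v/u) := pow_clog_le hvu1
  have hβ : (0:ℝ) ≤ α + 1 := by linarith
  have hmono : ((2:ℝ)^k)^(α+1) ≤ (4*(v/u))^(α+1) :=
    Real.rpow_le_rpow (by positivity) hclog hβ
  have hmul : ((4:ℝ)*(v/u))^(α+1) = 4^(α+1) * (v/u)^(α+1) :=
    Real.mul_rpow (by norm_num) (by linarith)
  calc rtail F u ≤ (2^(α+1))^k * rtail F (2^k * u) := hiter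
    _ ≤ (2^(α+1))^k * rtail F v := mul_le_mul_of_nonneg_left hanti (by positivity)
    _ = ((2:ℝ)^k)^(α+1) * rtail F v := by rw [hDk]
    _ ≤ (4^(α+1) * (v/u)^(α+1)) * rtail F v := by
        rw [← hmul]
        exact mul_le_mul_of_nonneg_right hmono (rtail_nonneg' F v)


/-- There is a constant `c > 0` (independent of `n` and of `ε`) such that for every `ε > 0`,
for all sufficiently large `n`,
`∫_{(-∞, xₙ]} e^{φₙ x} dF(x) ≤ 1 + c φₙ^κ + e^{2α} F̄(2α/φₙ) + (1+ε) e^{φₙ xₙ} F̄(xₙ)`. -/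
theorem stmt0
    (F : Measure ℝ) [IsProbabilityMeasure F]
    (α : ℝ) (hα : 1 < α)
    (L : ℝ → ℝ) (hLpos : ∀ x > 0, 0 < L x) (hL : SlowlyVarying L)
    (htail : ∀ x > 0, rtail F x = L x * x ^ (-α))
    (hmeanInt : Integrable (fun x => x) F) (hmean : ∫ x, x ∂F = 0)
    (κ : ℝ) (hκ0 : 0 < κ) (hκ : κ < min α 2)
    (hmom : Integrable (fun x => |x| ^ κ) F)
    (x φ : ℕ → ℝ) (hx : ∀ n, 0 < x n) (hφ : ∀ n, 0 < φ n)
    (hxtop : Tendsto x atTop atTop)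
    (hφx : Tendsto (fun n => φ n * x n) atTop atTop) :
    ∃ c > 0, ∀ ε > 0, ∃ N : ℕ, ∀ n ≥ N,
      ∫ y in Set.Iic (x n), Real.exp (φ n * y) ∂F ≤
        1 + c * φ n ^ κ + Real.exp (2 * α) * rtail F (2 * α / φ n)
          + (1 + ε) * Real.exp (φ n * x n) * rtail F (x n) := by
  have hα0 : (0:ℝ) < α := by linarith
  obtain ⟨X₁, hX₁1, hPot⟩ := rtail_potter F α hα L hLpos hL htail
  set β := α + 1 with hβdef
  have hβpos : (0:ℝ) < β := by rw [hβdef]; linarith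
  have hX₁0 : (0:ℝ) < X₁ := lt_of_lt_of_le one_pos hX₁1
  have hrtX₁ : 0 < rtail F X₁ := by
    rw [htail X₁ hX₁0]
    exact mul_pos (hLpos _ hX₁0) (Real.rpow_pos_of_pos hX₁0 _)
  have h4β : (0:ℝ) < 4^β := Real.rpow_pos_of_pos (by norm_num) _
  set c₀ := rtail F X₁ * X₁^β / 4^β with hc₀def
  have hc₀pos : 0 < c₀ :=
    div_pos (mul_pos hrtX₁ (Real.rpow_pos_of_pos hX₁0 _)) h4β
  have hlow : ∀ v, X₁ ≤ v → c₀ * v^(-β) ≤ rtail F v := by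
    intro v hv
    have hv0 : (0:ℝ) < v := lt_of_lt_of_le hX₁0 hv
    have h := hPot X₁ v le_rfl hv
    have hdiv : ((v/X₁):ℝ)^β = v^β / X₁^β := Real.div_rpow (le_of_lt hv0) (le_of_lt hX₁0) β
    rw [hdiv] at h
    have hvβ : (0:ℝ) < v^β := Real.rpow_pos_of_pos hv0 _
    have hXβ : (0:ℝ) < X₁^β := Real.rpow_pos_of_pos hX₁0 _
    have key : rtail F X₁ * X₁^β ≤ 4^β * v^β * rtail F v := by
      have h2 := mul_le_mul_of_nonneg_right h (le_of_lt hXβ)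
      have h3 : 4^β * (v^β/X₁^β) * rtail F v * X₁^β = 4^β * v^β * rtail F v := by
        field_simp
      rw [h3] at h2; exact h2
    have hc : c₀ ≤ rtail F v * v^β := by
      rw [hc₀def, div_le_iff₀ h4β]; nlinarith
    rw [Real.rpow_neg (le_of_lt hv0), mul_inv_le_iff₀ hvβ]
    exact hc
  -- constants
  set M := 2*α with hMdef
  have hM1 : (1:ℝ) ≤ M := by rw [hMdef]; linarith
  have hM0 : (0:ℝ) < M := by linarith
  set mκ := ∫ y, |y|^κ ∂F with hmκdef
  have hmκ0 : 0 ≤ mκ := integral_nonneg fun y => Real.rpow_nonneg (abs_nonneg y) κ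
  set c := (M*Real.exp M + (Real.exp M * (1+M^2)+1)) * (mκ + 1) + 1 with hcdef
  have hcpos : 0 < c := by
    have hexpM := Real.exp_pos M
    have h1 : 0 < M*Real.exp M + (Real.exp M * (1+M^2)+1) := by nlinarith
    have h2 : (0:ℝ) < mκ + 1 := by linarith
    rw [hcdef]; nlinarith [mul_pos h1 h2]
  refine ⟨c, hcpos, ?_⟩
  have key : ∀ ε : ℝ, 0 < ε → ε ≤ 1 → ∃ N : ℕ, ∀ n ≥ N,
      ∫ y in Set.Iic (x n), Real.exp (φ n * y) ∂F ≤
        1 + c * φ n ^ κ + Real.exp (2 * α) * rtail F (2 * α / φ n)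
          + (1 + ε) * Real.exp (φ n * x n) * rtail F (x n) := by
    intro ε hε hε1
    set t := (1+ε/4) ^ (-α⁻¹) with htdef
    have hbase : (1:ℝ) < 1 + ε/4 := by linarith
    have ht0 : 0 < t := Real.rpow_pos_of_pos (by linarith) _
    have ht1 : t < 1 := Real.rpow_lt_one_of_one_lt_of_neg hbase
      (neg_lt_zero.2 (by positivity))
    have htα : t ^ (-α) = 1 + ε/4 := by
      rw [htdef, ← Real.rpow_mul (by linarith : (0:ℝ) ≤ 1+ε/4)]
      rw [show -α⁻¹ * -α = α⁻¹ * α by ring, inv_mul_cancel₀ (ne_of_gt hα0), Real.rpow_one]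
    -- eventual conditions
    have hev1 : ∀ᶠ n in atTop, 2*α ≤ t * (φ n * x n) := by
      refine (hφx.eventually_ge_atTop ((2*α)/t)).mono fun n hn => ?_
      rw [div_le_iff₀ ht0] at hn; linarith [hn]
    have hev2 : ∀ᶠ n in atTop, X₁ ≤ t * x n := by
      refine (hxtop.eventually_ge_atTop (X₁/t)).mono fun n hn => ?_
      rw [div_le_iff₀ ht0] at hn; linarith [hn]
    have hev3 : ∀ᶠ n in atTop, L (t * x n) ≤ (1+ε/8) * L (x n) := by
      have hcomp : Tendsto (fun n => L (t * x n) / L (x n)) atTop (nhds 1) :=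
        (hL t ht0).comp hxtop
      refine (hcomp.eventually_le_const (by linarith : (1:ℝ) < 1 + ε/8)).mono fun n hn => ?_
      have hLx : 0 < L (x n) := hLpos _ (hx n)
      rw [div_le_iff₀ hLx] at hn; linarith
    have hev4 : ∀ᶠ n in atTop, 2*X₁ ≤ x n := hxtop.eventually_ge_atTop _
    have hev5 : ∀ᶠ n in atTop, (x n)^β * Real.exp (-(α/X₁) * x n) ≤ ε*c₀/6 := by
      have h := tendsto_rpow_mul_exp_neg_mul_atTop_nhds_zero β (α/X₁) (by positivity)
      exact (h.comp hxtop).eventually_le_const (by positivity)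
    have hev6 : ∀ᶠ n in atTop,
        4^β*t^(-β)*2^β * Real.exp (-(1-t)*(φ n * x n)) ≤ ε/6 := by
      have h1 : Tendsto (fun s : ℝ => Real.exp (-(1-t)*s)) atTop (nhds 0) := by
        apply Real.tendsto_exp_atBot.comp
        exact Tendsto.const_mul_atTop_of_neg (by linarith : -(1-t) < 0) tendsto_id
      have h2 : Tendsto (fun s : ℝ => 4^β*t^(-β)*2^β * Real.exp (-(1-t)*s)) atTop (nhds 0) := by
        have := h1.const_mul (4^β*t^(-β)*2^β)
        simpa using this
      exact (h2.comp hφx).eventually_le_const (by positivity)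
    have hev7 : ∀ᶠ n in atTop,
        4^β*t^(-β) * (8*t/α)^(β+1) * ((φ n * x n)^(β+1) * Real.exp (-(1/2)*(φ n * x n))) ≤ ε/6 := by
      have h := tendsto_rpow_mul_exp_neg_mul_atTop_nhds_zero (β+1) (1/2) (by norm_num)
      have h2 := h.const_mul (4^β*t^(-β) * (8*t/α)^(β+1))
      rw [mul_zero] at h2
      exact ((h2.comp hφx).eventually_le_const (by positivity))
    have hev8 : ∀ᶠ n in atTop,
        4^β*t^(-β) * (16*t/X₁)^(β+1) * ((x n)^(β+1) * Real.exp (-(α/X₁)*(x n))) ≤ ε/6 := by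
      have h := tendsto_rpow_mul_exp_neg_mul_atTop_nhds_zero (β+1) (α/X₁) (by positivity)
      have h2 := h.const_mul (4^β*t^(-β) * (16*t/X₁)^(β+1))
      rw [mul_zero] at h2
      exact ((h2.comp hxtop).eventually_le_const (by positivity))
    have hall := hev1.and (hev2.and (hev3.and (hev4.and (hev5.and (hev6.and (hev7.and hev8))))))
    obtain ⟨N, hN⟩ := eventually_atTop.1 hall
    refine ⟨N, fun n hn => ?_⟩
    obtain ⟨e1, e2, e3, e4, e5, e6, e7, e8⟩ := hN n hn

    -- per-n proof
    set φn := φ n with hφndef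
    set xn := x n with hxndef
    have hφn : 0 < φn := hφ n
    have hxn : 0 < xn := hx n
    set s := φn * xn with hsdef
    have hs0 : 0 < s := by rw [hsdef]; exact mul_pos hφn hxn
    set a := 2*α/φn with hadef
    have ha0 : 0 < a := by rw [hadef]; positivity
    have hatx : a ≤ t*xn := by
      rw [hadef, div_le_iff₀ hφn]
      calc 2*α ≤ t*s := e1
        _ = t*xn*φn := by rw [hsdef]; ring
    have htxx : t*xn ≤ xn := by
      calc t*xn ≤ 1*xn := mul_le_mul_of_nonneg_right ht1.le hxn.le
        _ = xn := one_mul xn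
    set a' := max a X₁ with ha'def
    have ha'X : X₁ ≤ a' := le_max_right _ _
    have ha'0 : 0 < a' := lt_of_lt_of_le hX₁0 ha'X
    have haa' : a ≤ a' := le_max_left _ _
    have ha'tx : a' ≤ t*xn := max_le hatx e2
    have hXxn : X₁ ≤ xn := by linarith only [e4, hX₁0]
    have hrtxn : 0 ≤ rtail F xn := ENNReal.toReal_nonneg
    set E := Real.exp s * rtail F xn with hEdef
    have hE0 : 0 ≤ E := mul_nonneg (Real.exp_pos _).le hrtxn
    have hεE : 0 ≤ (ε/6) * E := mul_nonneg (by linarith only [hε]) hE0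
    -- integrability
    have hInt : ∀ b : ℝ, IntegrableOn (fun y => Real.exp (φn*y)) (Set.Iic b) F :=
      fun b => aux_intOn_exp_Iic F φn b hφn.le
    have hIoc : ∀ u v : ℝ, IntegrableOn (fun y => Real.exp (φn*y)) (Set.Ioc u v) F :=
      fun u v => (hInt v).mono_set Set.Ioc_subset_Iic_self
    -- splittings
    have hsplit1 : ∫ y in Set.Iic xn, Real.exp (φn*y) ∂F
        = (∫ y in Set.Iic a, Real.exp (φn*y) ∂F) + ∫ y in Set.Ioc a xn, Real.exp (φn*y) ∂F := by
      rw [← setIntegral_union (Set.Iic_disjoint_Ioc le_rfl) measurableSet_Ioc (hInt a) (hIoc a xn),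
        Set.Iic_union_Ioc_eq_Iic (le_trans hatx htxx)]
    have hsplit2 : ∫ y in Set.Ioc a xn, Real.exp (φn*y) ∂F
        = (∫ y in Set.Ioc a (t*xn), Real.exp (φn*y) ∂F)
          + ∫ y in Set.Ioc (t*xn) xn, Real.exp (φn*y) ∂F := by
      rw [← setIntegral_union (Set.Ioc_disjoint_Ioc_of_le le_rfl) measurableSet_Ioc (hIoc a (t*xn))
        (hIoc (t*xn) xn), Set.Ioc_union_Ioc_eq_Ioc hatx htxx]
    have hsplit3 : ∫ y in Set.Ioc a (t*xn), Real.exp (φn*y) ∂F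
        = (∫ y in Set.Ioc a a', Real.exp (φn*y) ∂F)
          + ∫ y in Set.Ioc a' (t*xn), Real.exp (φn*y) ∂F := by
      rw [← setIntegral_union (Set.Ioc_disjoint_Ioc_of_le le_rfl) measurableSet_Ioc (hIoc a a')
        (hIoc a' (t*xn)), Set.Ioc_union_Ioc_eq_Ioc haa' ha'tx]
    -- B1 : the region (-∞, a]
    have hmono_r : ∀ y : ℝ, (0:ℝ) ≤ |y|^κ := fun y => Real.rpow_nonneg (abs_nonneg y) κ
    have hφκ : (0:ℝ) ≤ φn^κ := Real.rpow_nonneg hφn.le κ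
    have hφa : φn * a = M := by rw [hadef, hMdef]; field_simp
    have hFIic : ((F (Set.Iic a)).toReal) ≤ 1 := by
      have h := prob_le_one (μ := F) (s := Set.Iic a)
      simpa using ENNReal.toReal_mono ENNReal.one_ne_top h
    have hIabs : IntegrableOn (fun y => |y|^κ) (Set.Iic a) F := hmom.integrableOn
    have hint1 : IntegrableOn (fun _ : ℝ => (1:ℝ)) (Set.Iic a) F :=
      integrableOn_const
    have htail_le : ∫ y in Set.Iic a, |y|^κ ∂F ≤ mκ :=
      setIntegral_le_integral hmom (Filter.Eventually.of_forall hmono_r)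
    have htail_nn : 0 ≤ ∫ y in Set.Iic a, |y|^κ ∂F :=
      setIntegral_nonneg measurableSet_Iic (fun y _ => hmono_r y)
    have hB1 : ∫ y in Set.Iic a, Real.exp (φn*y) ∂F ≤ 1 + c * φn^κ := by
      rcases le_or_gt κ 1 with hκle | hκgt
      · -- κ ≤ 1
        have hC1nn : (0:ℝ) ≤ M * Real.exp M * φn^κ :=
          mul_nonneg (mul_nonneg hM0.le (Real.exp_pos M).le) hφκ
        have hpt : ∀ y ∈ Set.Iic a, Real.exp (φn*y) ≤ 1 + (M * Real.exp M * φn^κ) * |y|^κ := by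
          intro y hy
          rcases le_or_gt y 0 with hy0 | hy0
          · have h1 : Real.exp (φn*y) ≤ 1 :=
              Real.exp_le_one_iff.2 (mul_nonpos_of_nonneg_of_nonpos hφn.le hy0)
            linarith only [h1, mul_nonneg hC1nn (hmono_r y)]
          · have hu0 : 0 ≤ φn*y := by positivity
            have huM : φn*y ≤ M := by
              rw [← hφa]; exact mul_le_mul_of_nonneg_left hy hφn.le
            have h := exp_helper1 hu0 huM hM1 hκ0 hκle
            have hmul : (φn*y)^κ = φn^κ * |y|^κ := by
              rw [abs_of_pos hy0]; exact Real.mul_rpow hφn.le hy0.le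
            rw [hmul] at h
            calc Real.exp (φn*y) ≤ 1 + (M*Real.exp M) * (φn^κ * |y|^κ) := h
              _ = 1 + (M * Real.exp M * φn^κ) * |y|^κ := by ring
        have hRHSint : IntegrableOn (fun y => 1 + (M * Real.exp M * φn^κ) * |y|^κ) (Set.Iic a) F :=
          hint1.add (hIabs.const_mul _)
        have hle := setIntegral_mono_on (hInt a) hRHSint measurableSet_Iic hpt
        have heq : ∫ y in Set.Iic a, (1 + (M * Real.exp M * φn^κ) * |y|^κ) ∂F
            = (F (Set.Iic a)).toReal + (M * Real.exp M * φn^κ) * ∫ y in Set.Iic a, |y|^κ ∂F := by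
          rw [integral_add hint1 (hIabs.const_mul _), integral_const_mul, setIntegral_const]
          simp [smul_eq_mul, Measure.real]
        rw [heq] at hle
        have hcoef : M * Real.exp M * mκ ≤ c - 1 := by
          have q1 : (0:ℝ) ≤ M*Real.exp M := mul_nonneg hM0.le (Real.exp_pos M).le
          have q3 : (0:ℝ) ≤ Real.exp M * (1+M^2) :=
            mul_nonneg (Real.exp_pos M).le (by positivity)
          have q2 : (0:ℝ) ≤ Real.exp M * (1+M^2) * mκ := mul_nonneg q3 hmκ0
          rw [hcdef]
          nlinarith only [q1, q2, q3, hmκ0]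
        have hfin : (M * Real.exp M * φn^κ) * ∫ y in Set.Iic a, |y|^κ ∂F ≤ (c-1) * φn^κ := by
          have h1 : (M * Real.exp M * φn^κ) * ∫ y in Set.Iic a, |y|^κ ∂F
              ≤ (M * Real.exp M * φn^κ) * mκ := mul_le_mul_of_nonneg_left htail_le hC1nn
          have h2 : (M * Real.exp M * φn^κ) * mκ = (M * Real.exp M * mκ) * φn^κ := by ring
          rw [h2] at h1
          exact h1.trans (mul_le_mul_of_nonneg_right hcoef hφκ)
        linarith only [hle, hfin, hFIic, hφκ]
      · -- κ > 1
        have hκ2 : κ ≤ 2 := le_of_lt (lt_of_lt_of_le hκ (min_le_right _ _))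
        have hC2nn : (0:ℝ) ≤ (Real.exp M * (1+M^2) + 1) * φn^κ := by
          apply mul_nonneg _ hφκ
          positivity
        have hpt : ∀ y ∈ Set.Iic a,
            Real.exp (φn*y) ≤ 1 + φn*y + ((Real.exp M * (1+M^2) + 1) * φn^κ) * |y|^κ := by
          intro y hy
          have huM : φn*y ≤ M := by
            rw [← hφa]; exact mul_le_mul_of_nonneg_left hy hφn.le
          have h := exp_helper2 huM hM1 hκgt.le hκ2
          have hmul : |φn*y|^κ = φn^κ * |y|^κ := by
            rw [abs_mul, abs_of_pos hφn]; exact Real.mul_rpow hφn.le (abs_nonneg y)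
          rw [hmul] at h
          calc Real.exp (φn*y) ≤ 1 + φn*y + (Real.exp M * (1+M^2) + 1) * (φn^κ * |y|^κ) := h
            _ = 1 + φn*y + ((Real.exp M * (1+M^2) + 1) * φn^κ) * |y|^κ := by ring
        have hint2 : IntegrableOn (fun y : ℝ => φn*y) (Set.Iic a) F :=
          (hmeanInt.const_mul φn).integrableOn
        have hint3 : IntegrableOn (fun y : ℝ => ((Real.exp M * (1+M^2) + 1) * φn^κ) * |y|^κ)
            (Set.Iic a) F := hIabs.const_mul _
        have hRHSint : IntegrableOn
            (fun y => 1 + φn*y + ((Real.exp M * (1+M^2) + 1) * φn^κ) * |y|^κ) (Set.Iic a) F :=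
          (hint1.add hint2).add hint3
        have hle := setIntegral_mono_on (hInt a) hRHSint measurableSet_Iic hpt
        have hint12 : IntegrableOn (fun y : ℝ => 1 + φn*y) (Set.Iic a) F := by
          exact hint1.add hint2
        have heq : ∫ y in Set.Iic a, (1 + φn*y + ((Real.exp M * (1+M^2) + 1) * φn^κ) * |y|^κ) ∂F
            = (F (Set.Iic a)).toReal + φn * (∫ y in Set.Iic a, y ∂F)
              + ((Real.exp M * (1+M^2) + 1) * φn^κ) * ∫ y in Set.Iic a, |y|^κ ∂F := by
          rw [integral_add hint12 hint3, integral_add hint1 hint2,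
            integral_const_mul, integral_const_mul, setIntegral_const]
          simp [smul_eq_mul, Measure.real]
        rw [heq] at hle
        have hmean_le : ∫ y in Set.Iic a, y ∂F ≤ 0 := by
          have hcompl := integral_add_compl (s := Set.Iic a) measurableSet_Iic hmeanInt
          rw [Set.compl_Iic] at hcompl
          have hpos : 0 ≤ ∫ y in Set.Ioi a, y ∂F :=
            setIntegral_nonneg measurableSet_Ioi (fun y hy => le_of_lt (lt_trans ha0 hy))
          rw [hmean] at hcompl; linarith only [hcompl, hpos]
        have hcoef : (Real.exp M * (1+M^2) + 1) * mκ ≤ c - 1 := by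
          have q1 : (0:ℝ) ≤ M*Real.exp M := mul_nonneg hM0.le (Real.exp_pos M).le
          have q3 : (0:ℝ) ≤ Real.exp M * (1+M^2) :=
            mul_nonneg (Real.exp_pos M).le (by positivity)
          have q2 : (0:ℝ) ≤ Real.exp M * (1+M^2) * mκ := mul_nonneg q3 hmκ0
          have q4 : (0:ℝ) ≤ M*Real.exp M*mκ := mul_nonneg q1 hmκ0
          rw [hcdef]
          nlinarith only [q1, q2, q3, q4, hmκ0]
        have hfin : ((Real.exp M * (1+M^2) + 1) * φn^κ) * ∫ y in Set.Iic a, |y|^κ ∂F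
            ≤ (c-1) * φn^κ := by
          have h1 : ((Real.exp M * (1+M^2) + 1) * φn^κ) * ∫ y in Set.Iic a, |y|^κ ∂F
              ≤ ((Real.exp M * (1+M^2) + 1) * φn^κ) * mκ :=
            mul_le_mul_of_nonneg_left htail_le hC2nn
          have h2 : ((Real.exp M * (1+M^2) + 1) * φn^κ) * mκ
              = ((Real.exp M * (1+M^2) + 1) * mκ) * φn^κ := by ring
          rw [h2] at h1
          exact h1.trans (mul_le_mul_of_nonneg_right hcoef hφκ)
        have hlin : φn * (∫ y in Set.Iic a, y ∂F) ≤ 0 :=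
          mul_nonpos_of_nonneg_of_nonpos hφn.le hmean_le
        linarith only [hle, hfin, hFIic, hlin, hφκ]
    -- B4 : the top region (t*xn, xn]
    have htxpos : 0 < t * xn := mul_pos ht0 hxn
    have hB4 : ∫ y in Set.Ioc (t*xn) xn, Real.exp (φn*y) ∂F ≤ (1+ε/2) * E := by
      have h1 := setIntegral_exp_Ioc_le F φn (t*xn) xn hφn.le htxx
      have h2 : rtail F (t*xn) ≤ (1+ε/2) * rtail F xn := by
        rw [htail (t*xn) htxpos, htail xn hxn]
        have hmul : ((t*xn):ℝ)^(-α) = t^(-α) * xn^(-α) := Real.mul_rpow ht0.le hxn.le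
        rw [hmul, htα]
        have hxnα : (0:ℝ) < xn^(-α) := Real.rpow_pos_of_pos hxn _
        have hLxn : 0 < L xn := hLpos _ hxn
        have hLtxn : 0 ≤ L (t*xn) := (hLpos _ htxpos).le
        have hkey := mul_le_mul_of_nonneg_right e3
          (le_of_lt (mul_pos (by linarith only [hε] : (0:ℝ) < 1+ε/4) hxnα))
        have hεq : (0:ℝ) ≤ ε*(4-ε) :=
          mul_nonneg hε.le (by linarith only [hε1])
        have haux : (0:ℝ) ≤ (ε*(4-ε)) * (L xn * xn^(-α)) :=
          mul_nonneg hεq (mul_pos hLxn hxnα).le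
        linarith only [hkey, haux]
      have hexps : Real.exp (φn*xn) = Real.exp s := by rw [hsdef]
      calc ∫ y in Set.Ioc (t*xn) xn, Real.exp (φn*y) ∂F
          ≤ Real.exp (φn*xn) * rtail F (t*xn) := h1
        _ ≤ Real.exp (φn*xn) * ((1+ε/2)*rtail F xn) :=
            mul_le_mul_of_nonneg_left h2 (Real.exp_pos _).le
        _ = (1+ε/2)*E := by rw [hexps, hEdef]; ring
    -- B2 : the low region (a, a']
    have hB2 : ∫ y in Set.Ioc a a', Real.exp (φn*y) ∂F ≤ (ε/6) * E := by
      rcases le_or_gt X₁ a with hc | hc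
      · rw [ha'def, max_eq_left hc, Set.Ioc_self]
        simpa using hεE
      · have ha'eq : a' = X₁ := max_eq_right hc.le
        have hφlb : 2*α/X₁ ≤ φn := by
          rw [div_le_iff₀ hX₁0]
          have hc' : 2*α/φn < X₁ := by rw [← hadef]; exact hc
          have h := (div_lt_iff₀ hφn).1 hc'
          linarith only [h]
        have h1 : ∫ y in Set.Ioc a a', Real.exp (φn*y) ∂F ≤ Real.exp (φn*X₁) * rtail F a := by
          rw [ha'eq]; exact setIntegral_exp_Ioc_le F φn a X₁ hφn.le hc.le
        have h2 : rtail F a ≤ 1 := by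
          have h := prob_le_one (μ := F) (s := Set.Ioi a)
          simpa [rtail] using ENNReal.toReal_mono ENNReal.one_ne_top h
        have hexpbound : Real.exp (φn*X₁) ≤ (ε/6) * E := by
          have hstep1 : φn*X₁ - s ≤ -(α/X₁)*xn := by
            have hxX : xn/2 ≤ xn - X₁ := by linarith only [e4]
            have hmm := mul_le_mul hφlb hxX (by positivity) hφn.le
            have hre : (2*α/X₁)*(xn/2) = (α/X₁)*xn := by ring
            rw [hre] at hmm
            have hseq : s = φn * xn := hsdef
            linarith only [hmm, hseq]
          have hk2 : Real.exp (φn*X₁) ≤ Real.exp s * Real.exp (-(α/X₁)*xn) := by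
            rw [← Real.exp_add]
            exact Real.exp_le_exp.2 (by linarith only [hstep1])
          have hxnβ : (0:ℝ) < xn^β := Real.rpow_pos_of_pos hxn _
          have hk4 : Real.exp (-(α/X₁)*xn) ≤ (ε*c₀/6) * xn^(-β) := by
            rw [Real.rpow_neg hxn.le, ← div_eq_mul_inv, le_div_iff₀ hxnβ, mul_comm]
            exact e5
          have hlowxn := hlow xn hXxn
          calc Real.exp (φn*X₁) ≤ Real.exp s * ((ε*c₀/6) * xn^(-β)) :=
              le_trans hk2 (mul_le_mul_of_nonneg_left hk4 (Real.exp_pos _).le)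
            _ = (ε/6) * (Real.exp s * (c₀ * xn^(-β))) := by ring
            _ ≤ (ε/6) * (Real.exp s * rtail F xn) := by
                have h5 := mul_le_mul_of_nonneg_left hlowxn (Real.exp_pos s).le
                exact mul_le_mul_of_nonneg_left h5 (by linarith only [hε] : (0:ℝ) ≤ ε/6)
            _ = (ε/6) * E := by rw [hEdef]
        calc ∫ y in Set.Ioc a a', Real.exp (φn*y) ∂F
            ≤ Real.exp (φn*X₁) * rtail F a := h1
          _ ≤ Real.exp (φn*X₁) * 1 := mul_le_mul_of_nonneg_left h2 (Real.exp_pos _).le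
          _ = Real.exp (φn*X₁) := mul_one _
          _ ≤ (ε/6)*E := hexpbound
    -- B3 : the bulk region (a', t*xn]
    have hB3 : ∫ y in Set.Ioc a' (t*xn), Real.exp (φn*y) ∂F ≤ (ε/3) * E := by
      set w := t * xn with hwdef
      have hw0 : 0 < w := htxpos
      have hwxn : w ≤ xn := htxx
      have hwa' : 1 ≤ w / a' := (one_le_div ha'0).2 ha'tx
      set K := Nat.clog 2 ⌈w/a'⌉₊ with hKdef
      have h2K : w/a' ≤ (2:ℝ)^K := by
        have h1 : (⌈w/a'⌉₊ : ℕ) ≤ 2^K := Nat.le_pow_clog one_lt_two _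
        have h2 : ((⌈w/a'⌉₊ : ℕ) : ℝ) ≤ (((2:ℕ)^K : ℕ) : ℝ) := by exact_mod_cast h1
        have h3 : (((2:ℕ)^K : ℕ) : ℝ) = (2:ℝ)^K := by push_cast; ring
        rw [h3] at h2
        exact le_trans (Nat.le_ceil _) h2
      have hpowK : (0:ℝ) < (2:ℝ)^K := by positivity
      have hlast : w / 2^(K+1) ≤ a' := by
        rw [div_le_iff₀ (by positivity : (0:ℝ) < (2:ℝ)^(K+1))]
        have h2K1 : w/a' ≤ (2:ℝ)^(K+1) := by
          rw [pow_succ]; linarith only [h2K, hpowK]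
        calc w = (w/a') * a' := by field_simp
          _ ≤ (2:ℝ)^(K+1) * a' := mul_le_mul_of_nonneg_right h2K1 ha'0.le
          _ = a' * 2^(K+1) := by ring
      have hrec := bulk_rec F φn a' hφn.le (K+1) w hw0
      have hzero : ∫ y in Set.Ioc a' (w/2^(K+1)), Real.exp (φn*y) ∂F = 0 := by
        rw [Set.Ioc_eq_empty (not_lt.2 hlast)]
        simp
      rw [hzero, add_zero] at hrec
      set P := 4^β * t^(-β) with hPdef
      have hP0 : 0 < P := mul_pos h4β (Real.rpow_pos_of_pos ht0 _)
      have hterm : ∀ j : ℕ, Real.exp (φn*(w/2^j)) * rtail F (max a' (w/2^(j+1)))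
          ≤ Real.exp (φn*(w/2^j)) * (P * ((2:ℝ)^(j+1))^β * rtail F xn) := by
        intro j
        refine mul_le_mul_of_nonneg_left ?_ (Real.exp_pos _).le
        have hdivw : w/2^(j+1) ≤ w := div_le_self hw0.le (one_le_pow₀ one_le_two)
        have hu1 : X₁ ≤ max a' (w/2^(j+1)) := le_trans ha'X (le_max_left _ _)
        have hu2 : max a' (w/2^(j+1)) ≤ xn := max_le (le_trans ha'tx htxx) (le_trans hdivw hwxn)
        have hpot := hPot (max a' (w/2^(j+1))) xn hu1 hu2
        have hub : w/2^(j+1) ≤ max a' (w/2^(j+1)) := le_max_right _ _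
        have hu0 : 0 < max a' (w/2^(j+1)) := lt_of_lt_of_le hX₁0 hu1
        have hdivle : xn/(max a' (w/2^(j+1))) ≤ 2^(j+1)/t := by
          rw [div_le_div_iff₀ hu0 ht0]
          have hmm := mul_le_mul_of_nonneg_left hub (by positivity : (0:ℝ) ≤ (2:ℝ)^(j+1))
          have hre : (2:ℝ)^(j+1) * (w/2^(j+1)) = w := by field_simp
          rw [hre] at hmm
          have hre2 : xn * t = w := by rw [hwdef]; ring
          calc xn * t = w := hre2
            _ ≤ (2:ℝ)^(j+1) * (max a' (w/2^(j+1))) := hmm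
        have hstep : ((xn/(max a' (w/2^(j+1)))):ℝ)^β ≤ (((2:ℝ)^(j+1))/t)^β :=
          Real.rpow_le_rpow (by positivity) hdivle hβpos.le
        have hsplitr : (((2:ℝ)^(j+1))/t)^β = ((2:ℝ)^(j+1))^β * t^(-β) := by
          rw [Real.div_rpow (by positivity) ht0.le, Real.rpow_neg ht0.le, div_eq_mul_inv]
        calc rtail F (max a' (w/2^(j+1)))
            ≤ 4^β * (xn/(max a' (w/2^(j+1))))^β * rtail F xn := hpot
          _ ≤ 4^β * (((2:ℝ)^(j+1))/t)^β * rtail F xn :=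
              mul_le_mul_of_nonneg_right (mul_le_mul_of_nonneg_left hstep h4β.le) hrtxn
          _ = P * ((2:ℝ)^(j+1))^β * rtail F xn := by rw [hsplitr, hPdef]; ring
      -- term0
      have hsum0 : Real.exp (φn*(w/2^0)) * rtail F (max a' (w/2^(0+1)))
          ≤ Real.exp (φn*w) * (P * 2^β * rtail F xn) := by
        have h := hterm 0
        norm_num at h ⊢
        convert h using 4 <;> norm_num
      have hrestterm : ∀ j ∈ Finset.range K,
          Real.exp (φn*(w/2^(j+1))) * rtail F (max a' (w/2^(j+1+1)))
            ≤ Real.exp (φn*(w/2)) * (P * ((2:ℝ)^(K+1))^β * rtail F xn) := by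
        intro j hj
        have hjK : j + 2 ≤ K + 1 := by
          have := Finset.mem_range.1 hj; omega
        have h := hterm (j+1)
        have hexpm : Real.exp (φn*(w/2^(j+1))) ≤ Real.exp (φn*(w/2)) := by
          apply Real.exp_le_exp.2
          apply mul_le_mul_of_nonneg_left _ hφn.le
          apply div_le_div_of_nonneg_left hw0.le two_pos
          calc (2:ℝ) = 2^1 := (pow_one 2).symm
            _ ≤ 2^(j+1) := pow_le_pow_right₀ one_le_two (by omega)
        have hpowm : ((2:ℝ)^(j+1+1))^β ≤ ((2:ℝ)^(K+1))^β :=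
          Real.rpow_le_rpow (by positivity) (pow_le_pow_right₀ one_le_two hjK) hβpos.le
        have hnnc : (0:ℝ) ≤ P * ((2:ℝ)^(j+1+1))^β * rtail F xn :=
          mul_nonneg (mul_nonneg hP0.le (Real.rpow_nonneg (by positivity) _)) hrtxn
        calc Real.exp (φn*(w/2^(j+1))) * rtail F (max a' (w/2^(j+1+1)))
            ≤ Real.exp (φn*(w/2^(j+1))) * (P * ((2:ℝ)^(j+1+1))^β * rtail F xn) := h
          _ ≤ Real.exp (φn*(w/2)) * (P * ((2:ℝ)^(K+1))^β * rtail F xn) := by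
              apply mul_le_mul hexpm _ hnnc (Real.exp_pos _).le
              exact mul_le_mul_of_nonneg_right (mul_le_mul_of_nonneg_left hpowm hP0.le) hrtxn
      have hsumrest : ∑ j ∈ Finset.range K,
          Real.exp (φn*(w/2^(j+1))) * rtail F (max a' (w/2^(j+1+1)))
            ≤ (K:ℝ) * (Real.exp (φn*(w/2)) * (P * ((2:ℝ)^(K+1))^β * rtail F xn)) := by
        have h := Finset.sum_le_card_nsmul (Finset.range K)
          (fun j => Real.exp (φn*(w/2^(j+1))) * rtail F (max a' (w/2^(j+1+1))))
          (Real.exp (φn*(w/2)) * (P * ((2:ℝ)^(K+1))^β * rtail F xn)) hrestterm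
        rw [Finset.card_range, nsmul_eq_mul] at h
        exact h
      have hsumsplit : ∑ j ∈ Finset.range (K+1),
          Real.exp (φn*(w/2^j)) * rtail F (max a' (w/2^(j+1)))
          = (∑ j ∈ Finset.range K,
              Real.exp (φn*(w/2^(j+1))) * rtail F (max a' (w/2^(j+1+1)))) +
            Real.exp (φn*(w/2^0)) * rtail F (max a' (w/2^(0+1))) :=
        Finset.sum_range_succ' _ K
      -- term0 ≤ (ε/6) E
      have hterm0fin : Real.exp (φn*w) * (P * 2^β * rtail F xn) ≤ (ε/6) * E := by
        have hexpw : Real.exp (φn*w) = Real.exp s * Real.exp (-(1-t)*s) := by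
          rw [← Real.exp_add]
          congr 1
          rw [hwdef, hsdef]; ring
        calc Real.exp (φn*w) * (P * 2^β * rtail F xn)
            = (P*2^β*Real.exp (-(1-t)*s)) * (Real.exp s * rtail F xn) := by rw [hexpw]; ring
          _ ≤ (ε/6) * (Real.exp s * rtail F xn) := by
              refine mul_le_mul_of_nonneg_right ?_ (mul_nonneg (Real.exp_pos _).le hrtxn)
              calc P*2^β*Real.exp (-(1-t)*s) = 4^β*t^(-β)*2^β * Real.exp (-(1-t)*s) := by
                    rw [hPdef]
                _ ≤ ε/6 := e6
          _ = (ε/6) * E := by rw [hEdef]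
      -- rest ≤ (ε/6) E
      have hKle : (K:ℝ) ≤ (2:ℝ)^K := by exact_mod_cast (Nat.lt_two_pow_self (n := K)).le
      have h2K4 : (2:ℝ)^K ≤ 4*(w/a') := pow_clog_le hwa'
      have h2K8 : (2:ℝ)^(K+1) ≤ 8*(w/a') := by rw [pow_succ]; linarith only [h2K4]
      have hKpow : (K:ℝ) * ((2:ℝ)^(K+1))^β ≤ ((2:ℝ)^(K+1))^(β+1) := by
        have h1 : ((2:ℝ)^(K+1))^(β+1) = ((2:ℝ)^(K+1))^β * (2:ℝ)^(K+1) :=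
          Real.rpow_add_one (by positivity) β
        rw [h1]
        have h2 : (K:ℝ) ≤ (2:ℝ)^(K+1) := by
          rw [pow_succ]; linarith only [hKle, hpowK]
        have h3 : (0:ℝ) ≤ ((2:ℝ)^(K+1))^β := Real.rpow_nonneg (by positivity) β
        have h4 := mul_le_mul_of_nonneg_right h2 h3
        linarith only [h4]
      have hpow8 : ((2:ℝ)^(K+1))^(β+1) ≤ (8*(w/a'))^(β+1) :=
        Real.rpow_le_rpow (by positivity) h2K8 (by linarith only [hβpos])
      have hrestfin : (K:ℝ) * (Real.exp (φn*(w/2)) * (P * ((2:ℝ)^(K+1))^β * rtail F xn))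
          ≤ (ε/6) * E := by
        have hnn2 : (0:ℝ) ≤ P * rtail F xn := mul_nonneg hP0.le hrtxn
        have hnn1 : (0:ℝ) ≤ (K:ℝ) * ((2:ℝ)^(K+1))^β :=
          mul_nonneg (Nat.cast_nonneg K) (Real.rpow_nonneg (by positivity) _)
        rcases le_or_gt X₁ a with hc | hc
        · -- a' = a
          have ha'eq : a' = a := max_eq_left hc
          have hts0 : (0:ℝ) ≤ t*s/α := by positivity
          have hre : 8*(w/a') = 4*t*s/α := by
            rw [ha'eq, hadef, hwdef, hsdef]
            have hne : φn ≠ 0 := ne_of_gt hφn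
            have hne2 : α ≠ 0 := ne_of_gt hα0
            field_simp
            ring
          have hwa8 : 8*(w/a') ≤ (8*t/α)*s := by
            rw [hre]
            have hh : (8*t/α)*s = 8*t*s/α := by ring
            rw [hh]
            have hq : (0:ℝ) ≤ t*s/α := by positivity
            calc 4*t*s/α = 4*(t*s/α) := by ring
              _ ≤ 8*(t*s/α) := by linarith only [hq]
              _ = 8*t*s/α := by ring
          have hA1 : (K:ℝ) * ((2:ℝ)^(K+1))^β ≤ (8*t/α)^(β+1) * s^(β+1) := by
            refine (hKpow.trans hpow8).trans ?_
            calc (8*(w/a'))^(β+1) ≤ ((8*t/α)*s)^(β+1) :=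
                Real.rpow_le_rpow (by positivity) hwa8 (by linarith only [hβpos])
              _ = (8*t/α)^(β+1) * s^(β+1) := Real.mul_rpow (by positivity) hs0.le
          have hexpf : Real.exp (φn*(w/2)) ≤ Real.exp s * Real.exp (-(1/2)*s) := by
            rw [← Real.exp_add]
            apply Real.exp_le_exp.2
            have hh : φn*(w/2) = t*s/2 := by rw [hwdef, hsdef]; ring
            rw [hh]
            linarith only [mul_le_mul_of_nonneg_right ht1.le hs0.le]
          calc (K:ℝ) * (Real.exp (φn*(w/2)) * (P * ((2:ℝ)^(K+1))^β * rtail F xn))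
              = ((K:ℝ) * ((2:ℝ)^(K+1))^β) * Real.exp (φn*(w/2)) * (P * rtail F xn) := by ring
            _ ≤ ((8*t/α)^(β+1) * s^(β+1)) * (Real.exp s * Real.exp (-(1/2)*s))
                  * (P * rtail F xn) := by
                have hh := mul_le_mul hA1 hexpf (Real.exp_pos _).le (by positivity)
                exact mul_le_mul_of_nonneg_right hh hnn2
            _ = (P * (8*t/α)^(β+1) * (s^(β+1) * Real.exp (-(1/2)*s)))
                  * (Real.exp s * rtail F xn) := by ring
            _ ≤ (ε/6) * (Real.exp s * rtail F xn) := by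
                refine mul_le_mul_of_nonneg_right ?_ (mul_nonneg (Real.exp_pos _).le hrtxn)
                calc P * (8*t/α)^(β+1) * (s^(β+1) * Real.exp (-(1/2)*s))
                    = 4^β*t^(-β) * (8*t/α)^(β+1) * (s^(β+1) * Real.exp (-(1/2)*s)) := by
                      rw [hPdef]
                  _ ≤ ε/6 := e7
            _ = (ε/6) * E := by rw [hEdef]
        · -- a' = X₁
          have ha'eq : a' = X₁ := max_eq_right hc.le
          have hφlb : 2*α/X₁ ≤ φn := by
            rw [div_le_iff₀ hX₁0]
            have hc' : 2*α/φn < X₁ := by rw [← hadef]; exact hc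
            have h := (div_lt_iff₀ hφn).1 hc'
            linarith only [h]
          have hwa8 : 8*(w/a') ≤ (16*t/X₁)*xn := by
            rw [ha'eq, hwdef]
            have h1 : (0:ℝ) ≤ t*xn/X₁ := by positivity
            calc 8*(t*xn/X₁) = 8*(t*xn/X₁) := rfl
              _ ≤ 16*(t*xn/X₁) := by linarith only [h1]
              _ = (16*t/X₁)*xn := by ring
          have hA1 : (K:ℝ) * ((2:ℝ)^(K+1))^β ≤ (16*t/X₁)^(β+1) * xn^(β+1) := by
            refine (hKpow.trans hpow8).trans ?_
            calc (8*(w/a'))^(β+1) ≤ ((16*t/X₁)*xn)^(β+1) :=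
                Real.rpow_le_rpow (by positivity) hwa8 (by linarith only [hβpos])
              _ = (16*t/X₁)^(β+1) * xn^(β+1) := Real.mul_rpow (by positivity) hxn.le
          have hexpf : Real.exp (φn*(w/2)) ≤ Real.exp s * Real.exp (-(α/X₁)*xn) := by
            rw [← Real.exp_add]
            apply Real.exp_le_exp.2
            have hh : φn*(w/2) = t*s/2 := by rw [hwdef, hsdef]; ring
            rw [hh]
            have hm1' := mul_le_mul_of_nonneg_right hφlb hxn.le
            have hm1 : 2*((α/X₁)*xn) ≤ φn*xn := by
              have hre2 : (2*α/X₁)*xn = 2*((α/X₁)*xn) := by ring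
              rw [hre2] at hm1'
              exact hm1'
            have hm2 := mul_le_mul_of_nonneg_right ht1.le hs0.le
            have hseq : s = φn * xn := hsdef
            linarith only [hm1, hm2, hseq]
          calc (K:ℝ) * (Real.exp (φn*(w/2)) * (P * ((2:ℝ)^(K+1))^β * rtail F xn))
              = ((K:ℝ) * ((2:ℝ)^(K+1))^β) * Real.exp (φn*(w/2)) * (P * rtail F xn) := by ring
            _ ≤ ((16*t/X₁)^(β+1) * xn^(β+1)) * (Real.exp s * Real.exp (-(α/X₁)*xn))
                  * (P * rtail F xn) := by
                have hh := mul_le_mul hA1 hexpf (Real.exp_pos _).le (by positivity)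
                exact mul_le_mul_of_nonneg_right hh hnn2
            _ = (P * (16*t/X₁)^(β+1) * (xn^(β+1) * Real.exp (-(α/X₁)*xn)))
                  * (Real.exp s * rtail F xn) := by ring
            _ ≤ (ε/6) * (Real.exp s * rtail F xn) := by
                refine mul_le_mul_of_nonneg_right ?_ (mul_nonneg (Real.exp_pos _).le hrtxn)
                calc P * (16*t/X₁)^(β+1) * (xn^(β+1) * Real.exp (-(α/X₁)*xn))
                    = 4^β*t^(-β) * (16*t/X₁)^(β+1) * (xn^(β+1) * Real.exp (-(α/X₁)*xn)) := by
                      rw [hPdef]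
                  _ ≤ ε/6 := e8
            _ = (ε/6) * E := by rw [hEdef]
      rw [hsumsplit] at hrec
      linarith only [hrec, hsumrest, hrestfin, hsum0, hterm0fin]
    -- final assembly
    have hgoalE : (1+ε) * Real.exp s * rtail F xn = (1+ε) * E := by rw [hEdef]; ring
    have hRT : 0 ≤ Real.exp (2*α) * rtail F a :=
      mul_nonneg (Real.exp_pos _).le ENNReal.toReal_nonneg
    rw [hsplit1, hsplit2, hsplit3]
    linarith only [hB1, hB2, hB3, hB4, hRT, hgoalE]

  intro ε hε
  obtain ⟨N, hN⟩ := key (min ε 1) (lt_min hε one_pos) (min_le_right _ _)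
  refine ⟨N, fun n hn => (hN n hn).trans ?_⟩
  have h1 : (1 + min ε 1) * Real.exp (φ n * x n) * rtail F (x n)
      ≤ (1 + ε) * Real.exp (φ n * x n) * rtail F (x n) := by
    have hrt : (0:ℝ) ≤ rtail F (x n) := ENNReal.toReal_nonneg
    have hexp := Real.exp_pos (φ n * x n)
    have : (1 + min ε 1) ≤ 1 + ε := by
      have := min_le_left ε 1; linarith
    refine mul_le_mul_of_nonneg_right ?_ hrt
    exact mul_le_mul_of_nonneg_right this hexp.le
  linarith only [hN n hn, h1]
end
end

section
/- sup{ n·F̄(2α/θ_{n,b}) : b>n^{β+ε} } → 0 as n→∞ (in particular F̄(2α/θ_{n,b})=O(1/n) uniformly over b>n^{β+ε}). -/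
open MeasureTheory ProbabilityTheory Filter

set_option maxHeartbeats 2000000

noncomputable section

/-- The twisting parameter `θ_{n,b} = -log(n F̄(b)) / b`. -/
def theta (F : Measure ℝ) (n : ℕ) (b : ℝ) : ℝ := -Real.log ((n : ℝ) * rtail F b) / b


lemma aux_upper (G : ℝ → ℝ) (hG : Antitone G) (p x0 : ℝ) (hp : 0 < p) (hx0 : 0 < x0)
    (hGx0 : 0 ≤ G x0)
    (hdbl : ∀ x, x0 ≤ x → G (2*x) ≤ (2:ℝ)^(-p) * G x) :
    ∃ C > 0, ∀ x, x0 ≤ x → G x ≤ C * x ^ (-p) := by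
  have hCpos : (0:ℝ) < (G x0 + 1) * (2*x0) ^ p := by positivity
  refine ⟨(G x0 + 1) * (2*x0) ^ p, hCpos, ?_⟩
  set C := (G x0 + 1) * (2*x0) ^ p with hC
  have key : ∀ k : ℕ, ∀ x : ℝ, x0 ≤ x → x ≤ 2^k * (2*x0) → G x ≤ C * x ^ (-p) := by
    intro k
    induction k with
    | zero =>
      intro x hx1 hx2
      rw [pow_zero, one_mul] at hx2
      have hxpos : 0 < x := hx0.trans_le hx1
      have h2 : (2*x0) ^ (-p) ≤ x ^ (-p) :=
        Real.rpow_le_rpow_of_nonpos hxpos hx2 (neg_nonpos.mpr hp.le)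
      have h3 : C * (2*x0)^(-p) = G x0 + 1 := by
        rw [hC, mul_assoc, ← Real.rpow_add (by positivity), add_neg_cancel,
          Real.rpow_zero, mul_one]
      have h4 : C * (2*x0)^(-p) ≤ C * x^(-p) :=
        mul_le_mul_of_nonneg_left h2 hCpos.le
      have h5 : G x ≤ G x0 := hG hx1
      linarith
    | succ k ih =>
      intro x hx1 hx2
      rcases le_or_gt x (2^k * (2*x0)) with h | h
      · exact ih x hx1 h
      · have h2k : (1:ℝ) ≤ 2^k := one_le_pow₀ one_le_two
        have hx0' : x0 ≤ x/2 := by nlinarith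
        have hx2' : x/2 ≤ 2^k*(2*x0) := by rw [pow_succ] at hx2; nlinarith
        have hxpos : 0 < x := hx0.trans_le hx1
        have hd := hdbl (x/2) hx0'
        rw [mul_div_cancel₀ _ (two_ne_zero)] at hd
        have h6 : (2:ℝ)^(-p) * G (x/2) ≤ (2:ℝ)^(-p) * (C * (x/2)^(-p)) :=
          mul_le_mul_of_nonneg_left (ih _ hx0' hx2') (Real.rpow_nonneg (by norm_num) _)
        have h7 : (2:ℝ)^(-p) * (C * (x/2)^(-p)) = C * x^(-p) := by
          rw [Real.div_rpow hxpos.le (by norm_num)]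
          have h2p : (2:ℝ)^(-p) ≠ 0 := by positivity
          field_simp
        linarith
  intro x hx1
  obtain ⟨k, hk⟩ := pow_unbounded_of_one_lt (x / (2*x0)) (one_lt_two (α := ℝ))
  refine key k x hx1 ?_
  rw [div_lt_iff₀ (by positivity)] at hk
  nlinarith

lemma aux_lower (G : ℝ → ℝ) (hG : Antitone G) (q x0 : ℝ) (hq : 0 < q) (hx0 : 0 < x0)
    (hGpos : 0 < G (2*x0))
    (hdbl : ∀ x, x0 ≤ x → (2:ℝ)^(-q) * G x ≤ G (2*x)) :
    ∃ c > 0, ∀ x, x0 ≤ x → c * x ^ (-q) ≤ G x := by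
  have hcpos : (0:ℝ) < G (2*x0) * x0 ^ q * (2:ℝ)^(-q) := by positivity
  refine ⟨G (2*x0) * x0 ^ q * (2:ℝ)^(-q), hcpos, ?_⟩
  set c := G (2*x0) * x0 ^ q * (2:ℝ)^(-q) with hc
  have key : ∀ k : ℕ, ∀ x : ℝ, x0 ≤ x → x ≤ 2^k * (2*x0) → c * x ^ (-q) ≤ G x := by
    intro k
    induction k with
    | zero =>
      intro x hx1 hx2
      rw [pow_zero, one_mul] at hx2
      have hxpos : 0 < x := hx0.trans_le hx1
      have h2 : x ^ (-q) ≤ x0 ^ (-q) :=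
        Real.rpow_le_rpow_of_nonpos hx0 hx1 (neg_nonpos.mpr hq.le)
      have hx0q : x0 ^ q * x0 ^ (-q) = 1 := by
        rw [← Real.rpow_add hx0, add_neg_cancel, Real.rpow_zero]
      have h3 : c * x0^(-q) = G (2*x0) * (2:ℝ)^(-q) := by
        calc c * x0^(-q) = G (2*x0) * (2:ℝ)^(-q) * (x0 ^ q * x0 ^ (-q)) := by rw [hc]; ring
          _ = G (2*x0) * (2:ℝ)^(-q) := by rw [hx0q, mul_one]
      have h4 : c * x^(-q) ≤ c * x0^(-q) := mul_le_mul_of_nonneg_left h2 hcpos.le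
      have h5 : (2:ℝ)^(-q) ≤ 1 := Real.rpow_le_one_of_one_le_of_nonpos one_le_two (neg_nonpos.mpr hq.le)
      have h6 : G (2*x0) * (2:ℝ)^(-q) ≤ G (2*x0) := by nlinarith
      have h7 : G (2*x0) ≤ G x := hG hx2
      linarith
    | succ k ih =>
      intro x hx1 hx2
      rcases le_or_gt x (2^k * (2*x0)) with h | h
      · exact ih x hx1 h
      · have h2k : (1:ℝ) ≤ 2^k := one_le_pow₀ one_le_two
        have hx0' : x0 ≤ x/2 := by nlinarith
        have hx2' : x/2 ≤ 2^k*(2*x0) := by rw [pow_succ] at hx2; nlinarith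
        have hxpos : 0 < x := hx0.trans_le hx1
        have hd := hdbl (x/2) hx0'
        rw [mul_div_cancel₀ _ (two_ne_zero)] at hd
        have h6 : (2:ℝ)^(-q) * (c * (x/2)^(-q)) ≤ (2:ℝ)^(-q) * G (x/2) :=
          mul_le_mul_of_nonneg_left (ih _ hx0' hx2') (Real.rpow_nonneg (by norm_num) _)
        have h7 : (2:ℝ)^(-q) * (c * (x/2)^(-q)) = c * x^(-q) := by
          rw [Real.div_rpow hxpos.le (by norm_num)]
          have h2p : (2:ℝ)^(-q) ≠ 0 := by positivity
          field_simp
        linarith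
  intro x hx1
  obtain ⟨k, hk⟩ := pow_unbounded_of_one_lt (x / (2*x0)) (one_lt_two (α := ℝ))
  refine key k x hx1 ?_
  rw [div_lt_iff₀ (by positivity)] at hk
  nlinarith

/-- `sup { n F̄(2α/θ_{n,b}) : b > n^{β+ε} } → 0` as `n → ∞` (in particular
`F̄(2α/θ_{n,b}) = O(1/n)` uniformly over `b > n^{β+ε}`). -/
theorem stmt2
    (F : Measure ℝ) [IsProbabilityMeasure F]
    (α : ℝ) (hα : 1 < α)
    (L : ℝ → ℝ) (hLpos : ∀ x > 0, 0 < L x) (hL : SlowlyVarying L)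
    (htail : ∀ x > 0, rtail F x = L x * x ^ (-α))
    (hmeanInt : Integrable (fun x => x) F) (hmean : ∫ x, x ∂F = 0)
    (β : ℝ) (hβ : β = 1 / min α 2)
    (ε : ℝ) (hε : 0 < ε) :
    ∀ δ > 0, ∃ N : ℕ, ∀ n ≥ N, ∀ b > (n : ℝ) ^ (β + ε),
      (n : ℝ) * rtail F b < 1 ∧
      (n : ℝ) * rtail F (2 * α / theta F n b) < δ := by
  intro δ hδ
  obtain ⟨G, hG⟩ : ∃ G : ℝ → ℝ, G = rtail F := ⟨_, rfl⟩
  have htail' : ∀ x > 0, G x = L x * x ^ (-α) := by rw [hG]; exact htail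
  simp only [← hG]
  -- basic properties of G
  have hGanti : Antitone G := by
    intro x y hxy
    rw [hG]
    exact ENNReal.toReal_mono (measure_ne_top F _) (measure_mono (Set.Ioi_subset_Ioi hxy))
  have hGnonneg : ∀ x, 0 ≤ G x := by rw [hG]; exact fun x => ENNReal.toReal_nonneg
  have hα0 : 0 < α := by linarith
  have hGpos : ∀ x, 0 < x → 0 < G x := by
    intro x hx
    rw [htail' x hx]
    have := hLpos x hx
    positivity
  -- numeric setup
  set m := min α 2 with hm
  have hm1 : 1 < m := lt_min hα one_lt_two
  have hmα : m ≤ α := min_le_left _ _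
  have hm0 : 0 < m := by linarith
  have hβpos : 0 < β := by rw [hβ]; positivity
  have hmβ : m * β = 1 := by rw [hβ]; field_simp
  have hβα : 1 ≤ β * α := by nlinarith
  have hβε : 0 < β + ε := by linarith
  set η := m * ε / (2 * (β + ε)) with hη
  have hηpos : 0 < η := by rw [hη]; positivity
  have hηdef : η * (2 * (β + ε)) = m * ε := by
    rw [hη]; field_simp
  set p := α - η with hp
  set q := α + η with hq
  have hη2 : 2 * η ≤ m := by nlinarith
  have hppos : 0 < p := by rw [hp]; nlinarith
  have hqpos : 0 < q := by rw [hq]; linarith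
  have fact1 : 1 + (β + ε) * (-p) ≤ -(ε * α / 2) := by
    rw [hp]; nlinarith
  have fact2 : 1 / (β + ε) + (-p) ≤ -η := by
    rw [div_add' _ _ _ hβε.ne', div_le_iff₀ hβε]
    rw [hp]; nlinarith
  have fact3 : q + η ≤ 2 * α := by rw [hq]; nlinarith
  -- doubling limit
  have hT : Tendsto (fun x => G (2*x) / G x) atTop (nhds ((2:ℝ) ^ (-α))) := by
    have h1 : Tendsto (fun x => L (2*x) / L x * (2:ℝ) ^ (-α)) atTop
        (nhds (1 * (2:ℝ) ^ (-α))) := (hL 2 two_pos).mul_const _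
    rw [one_mul] at h1
    refine h1.congr' ?_
    filter_upwards [eventually_gt_atTop 0] with x hx
    have h2x : (0:ℝ) < 2 * x := by linarith
    have hLx := hLpos x hx
    have hxα : (0:ℝ) < x ^ (-α) := Real.rpow_pos_of_pos hx _
    rw [htail' _ h2x, htail' _ hx, Real.mul_rpow (by norm_num) hx.le]
    field_simp
  -- eventual doubling inequalities
  have hlt1 : (2:ℝ) ^ (-α) < (2:ℝ) ^ (-p) :=
    Real.rpow_lt_rpow_of_exponent_lt one_lt_two (by rw [hp]; linarith)
  have hlt2 : (2:ℝ) ^ (-q) < (2:ℝ) ^ (-α) :=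
    Real.rpow_lt_rpow_of_exponent_lt one_lt_two (by rw [hq]; linarith)
  obtain ⟨X0, hX0⟩ := eventually_atTop.mp
    ((hT.eventually_lt_const hlt1).and (hT.eventually_const_lt hlt2))
  set x2 := max X0 1 with hx2
  have hx2pos : (0:ℝ) < x2 := lt_of_lt_of_le one_pos (le_max_right _ _)
  have hx2one : (1:ℝ) ≤ x2 := le_max_right _ _
  have hdblU : ∀ x, x2 ≤ x → G (2*x) ≤ (2:ℝ)^(-p) * G x := by
    intro x hx
    have hxpos : 0 < x := lt_of_lt_of_le hx2pos hx
    have h := (hX0 x (le_trans (le_max_left _ _) hx)).1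
    rw [div_lt_iff₀ (hGpos x hxpos)] at h
    linarith
  have hdblL : ∀ x, x2 ≤ x → (2:ℝ)^(-q) * G x ≤ G (2*x) := by
    intro x hx
    have hxpos : 0 < x := lt_of_lt_of_le hx2pos hx
    have h := (hX0 x (le_trans (le_max_left _ _) hx)).2
    rw [lt_div_iff₀ (hGpos x hxpos)] at h
    linarith
  obtain ⟨C, hCpos, hCb⟩ := aux_upper G hGanti p x2 hppos hx2pos (hGnonneg _) hdblU
  obtain ⟨c, hcpos, hcb⟩ := aux_lower G hGanti q x2 hqpos hx2pos
    (hGpos _ (by linarith)) hdblL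
  -- the function h(b) = C (log b)^p b^{-η} tends to 0
  have hh : Tendsto (fun b : ℝ => C * Real.log b ^ p * b ^ (-η)) atTop (nhds 0) := by
    have h0 := tendsto_rpow_mul_exp_neg_mul_atTop_nhds_zero p η hηpos
    have h1 := h0.comp Real.tendsto_log_atTop
    have h2 := h1.const_mul C
    rw [mul_zero] at h2
    refine h2.congr' ?_
    filter_upwards [eventually_gt_atTop 0] with b hb
    simp only [Function.comp]
    rw [Real.rpow_def_of_pos hb (-η)]
    rw [show Real.log b * -η = -η * Real.log b from mul_comm _ _]
    ring
  -- conditions on b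
  obtain ⟨B, hB⟩ : ∃ B : ℝ, ∀ b ≥ B, x2 ≤ b ∧ 1 ≤ Real.log b ∧
      |Real.log c| ≤ η * Real.log b ∧ x2 ≤ b / Real.log b ∧
      C * Real.log b ^ p * b ^ (-η) < δ := by
    rw [← eventually_atTop]
    have e1 : ∀ᶠ b : ℝ in atTop, x2 ≤ b := eventually_ge_atTop x2
    have e2 : ∀ᶠ b : ℝ in atTop, 1 ≤ Real.log b :=
      Real.tendsto_log_atTop.eventually_ge_atTop 1
    have e3 : ∀ᶠ b : ℝ in atTop, |Real.log c| ≤ η * Real.log b :=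
      (Real.tendsto_log_atTop.const_mul_atTop hηpos).eventually_ge_atTop _
    have e4 : ∀ᶠ b : ℝ in atTop, x2 ≤ b / Real.log b := by
      have hlo := Real.isLittleO_log_id_atTop.def (show (0:ℝ) < 1/(x2+1) by positivity)
      filter_upwards [hlo, eventually_ge_atTop (1:ℝ), e2] with b hb1 hb2 hb3
      have hbpos : (0:ℝ) < b := by linarith
      have hlogpos : (0:ℝ) < Real.log b := by linarith
      rw [Real.norm_eq_abs, Real.norm_eq_abs, abs_of_nonneg hlogpos.le, id,
        abs_of_nonneg hbpos.le] at hb1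
      rw [le_div_iff₀ hlogpos]
      have hx21 : (0:ℝ) < x2 + 1 := by linarith
      have h5 : (x2+1) * Real.log b ≤ (x2+1) * (1/(x2+1) * b) :=
        mul_le_mul_of_nonneg_left hb1 hx21.le
      have h6 : (x2+1) * (1/(x2+1) * b) = b := by field_simp
      nlinarith
    have e5 : ∀ᶠ b : ℝ in atTop, C * Real.log b ^ p * b ^ (-η) < δ :=
      hh.eventually_lt_const hδ
    filter_upwards [e1, e2, e3, e4, e5] with b h1 h2 h3 h4 h5
    exact ⟨h1, h2, h3, h4, h5⟩
  -- conditions on n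
  obtain ⟨N, hNall⟩ : ∃ N : ℕ, ∀ n ≥ N, 1 ≤ n ∧ B ≤ (n:ℝ) ^ (β+ε) ∧
      C * (n:ℝ) ^ (-(ε * α / 2)) < 1 := by
    rw [← eventually_atTop]
    have f1 : ∀ᶠ n : ℕ in atTop, 1 ≤ n := eventually_ge_atTop 1
    have f2 : ∀ᶠ n : ℕ in atTop, B ≤ (n:ℝ) ^ (β+ε) :=
      ((tendsto_rpow_atTop hβε).comp tendsto_natCast_atTop_atTop).eventually_ge_atTop B
    have f3 : ∀ᶠ n : ℕ in atTop, C * (n:ℝ) ^ (-(ε * α / 2)) < 1 := by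
      have h0 := (tendsto_rpow_neg_atTop (show (0:ℝ) < ε * α / 2 by positivity)).comp
        tendsto_natCast_atTop_atTop
      have h1 := h0.const_mul C
      rw [mul_zero] at h1
      exact h1.eventually_lt_const one_pos
    filter_upwards [f1, f2, f3] with n g1 g2 g3
    exact ⟨g1, g2, g3⟩
  refine ⟨N, ?_⟩
  intro n hn b hb
  obtain ⟨hn1, hnB, hnC⟩ := hNall n hn
  have hn1R : (1:ℝ) ≤ (n:ℝ) := by exact_mod_cast hn1
  have hnpos : (0:ℝ) < (n:ℝ) := by linarith
  have hbB : B ≤ b := le_trans hnB hb.le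
  obtain ⟨hbx2, hlog1, habsc, hbdiv, hfinal⟩ := hB b hbB
  have hbpos : (0:ℝ) < b := by linarith
  have hlogpos : (0:ℝ) < Real.log b := by linarith
  have hnrpos : (0:ℝ) < (n:ℝ) ^ (β+ε) := Real.rpow_pos_of_pos hnpos _
  -- PART A : n * G b < 1
  have hGb_up : G b ≤ C * b ^ (-p) := hCb b hbx2
  have hbp : b ^ (-p) ≤ ((n:ℝ) ^ (β+ε)) ^ (-p) :=
    Real.rpow_le_rpow_of_nonpos hnrpos hb.le (neg_nonpos.mpr hppos.le)
  have hpow : ((n:ℝ) ^ (β+ε)) ^ (-p) = (n:ℝ) ^ ((β+ε) * (-p)) :=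
    (Real.rpow_mul (Nat.cast_nonneg n) _ _).symm
  have hA : (n:ℝ) * G b < 1 := by
    have s1 : (n:ℝ) * G b ≤ (n:ℝ) * (C * (n:ℝ) ^ ((β+ε) * (-p))) := by
      apply mul_le_mul_of_nonneg_left _ (Nat.cast_nonneg n)
      calc G b ≤ C * b ^ (-p) := hGb_up
        _ ≤ C * ((n:ℝ) ^ (β+ε)) ^ (-p) := mul_le_mul_of_nonneg_left hbp hCpos.le
        _ = C * (n:ℝ) ^ ((β+ε) * (-p)) := by rw [hpow]
    have s2 : (n:ℝ) * (C * (n:ℝ) ^ ((β+ε) * (-p))) = C * (n:ℝ) ^ (1 + (β+ε) * (-p)) := by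
      rw [Real.rpow_add hnpos, Real.rpow_one]; ring
    have s3 : (n:ℝ) ^ (1 + (β+ε) * (-p)) ≤ (n:ℝ) ^ (-(ε * α / 2)) :=
      Real.rpow_le_rpow_of_exponent_le hn1R fact1
    have s4 : C * (n:ℝ) ^ (1 + (β+ε) * (-p)) ≤ C * (n:ℝ) ^ (-(ε * α / 2)) :=
      mul_le_mul_of_nonneg_left s3 hCpos.le
    linarith
  refine ⟨hA, ?_⟩
  -- PART B
  have hGbpos : 0 < G b := hGpos b hbpos
  have hnGbpos : 0 < (n:ℝ) * G b := by positivity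
  obtain ⟨u, hu⟩ : ∃ u : ℝ, u = -Real.log ((n:ℝ) * G b) := ⟨_, rfl⟩
  have hupos : 0 < u := by
    have h := Real.log_neg hnGbpos hA
    rw [hu]; linarith
  have hθ : theta F n b = u / b := by rw [hu, hG]; rfl
  -- upper bound on u
  have hGb_lb : c * b ^ (-q) ≤ G b := hcb b hbx2
  have hbq : (0:ℝ) < b ^ (-q) := Real.rpow_pos_of_pos hbpos _
  have hlogGb : Real.log c + -(q * Real.log b) ≤ Real.log (G b) := by
    have h1 : Real.log (c * b ^ (-q)) ≤ Real.log (G b) :=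
      Real.log_le_log (by positivity) hGb_lb
    rw [Real.log_mul hcpos.ne' hbq.ne', Real.log_rpow hbpos, neg_mul] at h1
    exact h1
  have hlogn : 0 ≤ Real.log (n:ℝ) := Real.log_natCast_nonneg n
  have hu_le : u ≤ 2 * α * Real.log b := by
    rw [hu, Real.log_mul hnpos.ne' hGbpos.ne']

    have h2 : -Real.log c ≤ |Real.log c| := neg_le_abs _
    have h3 : q * Real.log b + η * Real.log b ≤ 2 * α * Real.log b := by
      have := mul_le_mul_of_nonneg_right fact3 hlogpos.le
      rw [add_mul] at this
      exact this
    have h4 : |Real.log c| ≤ η * Real.log b := habsc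
    linarith
  -- the point y
  set y := 2 * α / theta F n b with hy
  have hy_eq : y = 2 * α * b / u := by
    rw [hy, hθ, div_div_eq_mul_div]
  have hy_ge : b / Real.log b ≤ y := by
    rw [hy_eq]
    have h1 : 2 * α * b / (2 * α * Real.log b) ≤ 2 * α * b / u :=
      div_le_div_of_nonneg_left (by positivity) hupos hu_le
    rw [mul_div_mul_left _ _ (by positivity : (0:ℝ) < 2 * α).ne'] at h1
    exact h1
  -- final bound
  have hGy : G y ≤ C * (b / Real.log b) ^ (-p) := by
    calc G y ≤ G (b / Real.log b) := hGanti hy_ge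
      _ ≤ C * (b / Real.log b) ^ (-p) := hCb _ hbdiv
  have hsplit : (b / Real.log b) ^ (-p) = Real.log b ^ p * b ^ (-p) := by
    rw [Real.div_rpow hbpos.le hlogpos.le, Real.rpow_neg hlogpos.le, div_inv_eq_mul]
    ring
  have hnle : (n:ℝ) ≤ b ^ (1/(β+ε)) := by
    have h1 : ((n:ℝ) ^ (β+ε)) ^ (1/(β+ε)) ≤ b ^ (1/(β+ε)) :=
      Real.rpow_le_rpow (Real.rpow_nonneg (Nat.cast_nonneg n) _) hb.le (by positivity)
    rwa [← Real.rpow_mul (Nat.cast_nonneg n), mul_one_div_cancel hβε.ne',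
      Real.rpow_one] at h1
  have hfb : (n:ℝ) * G y < δ := by
    have t0 : (0:ℝ) ≤ C * (Real.log b ^ p * b ^ (-p)) := by positivity
    have t1 : (n:ℝ) * G y ≤ (n:ℝ) * (C * (Real.log b ^ p * b ^ (-p))) := by
      apply mul_le_mul_of_nonneg_left _ (Nat.cast_nonneg n)
      calc G y ≤ C * (b / Real.log b) ^ (-p) := hGy
        _ = C * (Real.log b ^ p * b ^ (-p)) := by rw [hsplit]
    have t2 : (n:ℝ) * (C * (Real.log b ^ p * b ^ (-p))) ≤
        b ^ (1/(β+ε)) * (C * (Real.log b ^ p * b ^ (-p))) :=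
      mul_le_mul_of_nonneg_right hnle t0
    have t3 : b ^ (1/(β+ε)) * (C * (Real.log b ^ p * b ^ (-p))) =
        C * Real.log b ^ p * (b ^ (1/(β+ε) + (-p))) := by
      rw [Real.rpow_add hbpos]; ring
    have t4 : b ^ (1/(β+ε) + (-p)) ≤ b ^ (-η) :=
      Real.rpow_le_rpow_of_exponent_le (by linarith : (1:ℝ) ≤ b) fact2
    have t5 : C * Real.log b ^ p * (b ^ (1/(β+ε) + (-p))) ≤
        C * Real.log b ^ p * b ^ (-η) := by
      apply mul_le_mul_of_nonneg_left t4
      positivity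
    linarith
  exact hfb
end
end

section
/- The estimator Z_dom is unbiased for P(A_dom) under the importance sampling measure P̃ and its second moment is bounded by (nF̄(b))²; that is, ∫ Z_dom dP̃ = F^{⊗n}(A_dom) and ∫ Z_dom² dP̃ ≤ (nF̄(b))². -/
open MeasureTheory ProbabilityTheory Filter
open scoped Classical

noncomputable section

/-- The importance sampling measure `P̃ = (1/n) Σ_{i=1}^n ⊗_j μ_j^{(i)}`, where `μ_j^{(i)} = F`
for `j ≠ i` and `μ_i^{(i)}` is `F` conditioned on `(b,∞)`. -/
def Ptilde (F : Measure ℝ) (n : ℕ) (b : ℝ) : Measure (Fin n → ℝ) :=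
  ((n : ENNReal))⁻¹ •
    ∑ i : Fin n, Measure.pi (fun j => if j = i then F[|Set.Ioi b] else F)

/-- The dominant event `A_dom = {x ∈ ℝⁿ : x₁+⋯+xₙ > b and max_j x_j > b}`. -/
def Adom (n : ℕ) (b : ℝ) : Set (Fin n → ℝ) :=
  {x | (∑ j, x j) > b ∧ ∃ j, x j > b}

/-- The estimator `Z_dom(x) = n F̄(b) / #{j : x_j > b}` on `A_dom`, and `0` otherwise. -/
def Zdom (F : Measure ℝ) (n : ℕ) (b : ℝ) (x : Fin n → ℝ) : ℝ :=
  if x ∈ Adom n b then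
    (n : ℝ) * rtail F b / (Finset.univ.filter (fun j => x j > b)).card
  else 0

lemma measurableSet_Adom (n : ℕ) (b : ℝ) : MeasurableSet (Adom n b) := by
  have h1 : MeasurableSet {x : Fin n → ℝ | (∑ j, x j) > b} :=
    measurableSet_lt measurable_const (Finset.measurable_sum _ fun j _ => measurable_pi_apply j)
  have h2 : MeasurableSet {x : Fin n → ℝ | ∃ j, x j > b} := by
    rw [Set.setOf_exists]
    exact MeasurableSet.iUnion fun j => measurableSet_lt measurable_const (measurable_pi_apply j)
  exact h1.inter h2

lemma measurable_card (n : ℕ) (b : ℝ) :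
    Measurable (fun x : Fin n → ℝ => ((Finset.univ.filter (fun j => x j > b)).card : ℝ)) := by
  have : (fun x : Fin n → ℝ => ((Finset.univ.filter (fun j => x j > b)).card : ℝ)) =
      fun x => ∑ j : Fin n, if x j > b then (1 : ℝ) else 0 := by
    funext x
    rw [Finset.card_filter]
    push_cast
    rfl
  rw [this]
  exact Finset.measurable_sum _ fun j _ =>
    Measurable.ite (measurableSet_lt measurable_const (measurable_pi_apply j))
      measurable_const measurable_const

lemma measurable_Zdom (F : Measure ℝ) (n : ℕ) (b : ℝ) : Measurable (Zdom F n b) := by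
  unfold Zdom
  exact Measurable.ite (measurableSet_Adom n b)
    (Measurable.div measurable_const (measurable_card n b)) measurable_const

lemma Zdom_nonneg (F : Measure ℝ) (n : ℕ) (b : ℝ) (x : Fin n → ℝ) : 0 ≤ Zdom F n b x := by
  unfold Zdom
  split_ifs with h
  · have : 0 ≤ rtail F b := ENNReal.toReal_nonneg
    positivity
  · exact le_rfl

lemma Zdom_le (F : Measure ℝ) (n : ℕ) (b : ℝ) (x : Fin n → ℝ) :
    Zdom F n b x ≤ (n : ℝ) * rtail F b := by
  unfold Zdom
  split_ifs with h
  · apply div_le_self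
    · have : 0 ≤ rtail F b := ENNReal.toReal_nonneg
      positivity
    · obtain ⟨j, hj⟩ := h.2
      have : j ∈ Finset.univ.filter (fun j => x j > b) := by simp [hj]
      have hcard : 1 ≤ (Finset.univ.filter (fun j : Fin n => x j > b)).card :=
        Finset.card_pos.mpr ⟨j, this⟩
      exact_mod_cast hcard
  · have : 0 ≤ rtail F b := ENNReal.toReal_nonneg
    positivity

lemma pi_cond_eq (F : Measure ℝ) [IsProbabilityMeasure F] (b : ℝ)
    (hFb : F (Set.Ioi b) ≠ 0) (n : ℕ) (i : Fin n) :
    Measure.pi (fun j : Fin n => if j = i then F[|Set.Ioi b] else F) =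
      (F (Set.Ioi b))⁻¹ • (Measure.pi fun _ : Fin n => F).restrict {x | x i > b} := by
  haveI hc : IsProbabilityMeasure (F[|Set.Ioi b]) := cond_isProbabilityMeasure hFb
  haveI : ∀ j : Fin n, SigmaFinite (if j = i then F[|Set.Ioi b] else F) := fun j => by
    split_ifs <;> infer_instance
  apply Measure.pi_eq
  intro s hs
  have hS : MeasurableSet {x : Fin n → ℝ | x i > b} :=
    measurableSet_lt measurable_const (measurable_pi_apply i)
  rw [Measure.smul_apply, Measure.restrict_apply' hS, smul_eq_mul]
  have hset : (Set.pi Set.univ s) ∩ {x : Fin n → ℝ | x i > b} =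
      Set.pi Set.univ (Function.update s i (s i ∩ Set.Ioi b)) := by
    ext x
    simp only [Set.mem_inter_iff, Set.mem_pi, Set.mem_univ, forall_true_left, Set.mem_setOf_eq,
      Function.update]
    constructor
    · rintro ⟨h1, h2⟩ j
      split_ifs with hj
      · subst hj; exact ⟨h1 j, h2⟩
      · exact h1 j
    · intro h
      constructor
      · intro j
        have := h j
        split_ifs at this with hj
        · subst hj; exact this.1
        · exact this
      · have := h i
        simp at this
        exact this.2
  rw [hset, Measure.pi_pi]
  rw [← Finset.mul_prod_erase Finset.univ
      (fun j => F (Function.update s i (s i ∩ Set.Ioi b) j)) (Finset.mem_univ i)]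
  rw [← Finset.mul_prod_erase Finset.univ
      (fun j => (if j = i then F[|Set.Ioi b] else F) (s j)) (Finset.mem_univ i)]
  have herase : ∀ j ∈ Finset.univ.erase i,
      F (Function.update s i (s i ∩ Set.Ioi b) j) = (if j = i then F[|Set.Ioi b] else F) (s j) := by
    intro j hj
    rw [if_neg (Finset.ne_of_mem_erase hj), Function.update_of_ne (Finset.ne_of_mem_erase hj)]
  rw [Finset.prod_congr rfl herase]
  simp only [Function.update_self, if_true, eq_self_iff_true]
  rw [cond_apply measurableSet_Ioi F (s i), Set.inter_comm]
  ring

lemma sum_indicator_Zdom (F : Measure ℝ) (n : ℕ) (b : ℝ) (x : Fin n → ℝ) :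
    ∑ i : Fin n, ({y : Fin n → ℝ | y i > b}).indicator (Zdom F n b) x =
      (Adom n b).indicator (fun _ => (n : ℝ) * rtail F b) x := by
  by_cases hx : x ∈ Adom n b
  · have hterm : ∀ i : Fin n, ({y : Fin n → ℝ | y i > b}).indicator (Zdom F n b) x =
        if x i > b then Zdom F n b x else 0 := by
      intro i
      by_cases h : x i > b <;> simp [Set.indicator, h]
    simp_rw [hterm]
    rw [← Finset.sum_filter, Finset.sum_const, Set.indicator_of_mem hx]
    set N := (Finset.univ.filter (fun j : Fin n => x j > b)).card with hN
    have hNpos : 0 < N := by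
      obtain ⟨j, hj⟩ := hx.2
      exact Finset.card_pos.mpr ⟨j, by simp [hj]⟩
    have hZ : Zdom F n b x = (n : ℝ) * rtail F b / N := by
      rw [Zdom, if_pos hx]
    rw [hZ, nsmul_eq_mul]
    field_simp
  · have hZ : Zdom F n b x = 0 := by rw [Zdom, if_neg hx]
    rw [Set.indicator_of_notMem hx]
    apply Finset.sum_eq_zero
    intro i _
    by_cases h : x ∈ {y : Fin n → ℝ | y i > b}
    · rw [Set.indicator_of_mem h, hZ]
    · rw [Set.indicator_of_notMem h]

lemma integrable_of_bdd {α : Type*} [MeasurableSpace α] (P : Measure α) [IsFiniteMeasure P]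
    {f : α → ℝ} (hf : Measurable f) (C : ℝ) (h : ∀ x, |f x| ≤ C) : Integrable f P :=
  Integrable.mono' (integrable_const C) hf.aestronglyMeasurable (ae_of_all _ h)


/-- `Z_dom` is unbiased for `P(A_dom)` under `P̃`, and its second moment under `P̃` is at
most `(n F̄(b))²`. -/
theorem stmt4
    (F : Measure ℝ) [IsProbabilityMeasure F] [NullSingletonClass F]
    (n : ℕ) (hn : 0 < n) (b : ℝ) (hb : 0 < b) (hFb : 0 < rtail F b) :
    (∫ x, Zdom F n b x ∂(Ptilde F n b)) =
      ((Measure.pi fun _ : Fin n => F) (Adom n b)).toReal ∧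
    (∫ x, (Zdom F n b x) ^ 2 ∂(Ptilde F n b)) ≤ ((n : ℝ) * rtail F b) ^ 2 := by
  have hS : ∀ i : Fin n, MeasurableSet {x : Fin n → ℝ | x i > b} := fun i =>
    measurableSet_lt measurable_const (measurable_pi_apply i)
  have hFb0 : F (Set.Ioi b) ≠ 0 := by
    intro h; rw [rtail, h] at hFb; simp at hFb
  haveI hcond : IsProbabilityMeasure (F[|Set.Ioi b]) := cond_isProbabilityMeasure hFb0
  have hPi : ∀ i : Fin n, IsProbabilityMeasure
      (Measure.pi (fun j : Fin n => if j = i then F[|Set.Ioi b] else F)) := by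
    intro i
    haveI : ∀ j : Fin n, IsProbabilityMeasure
        ((fun j : Fin n => if j = i then F[|Set.Ioi b] else F) j) := fun j => by
      dsimp only; split_ifs <;> infer_instance
    infer_instance
  set μ : Measure (Fin n → ℝ) := Measure.pi fun _ : Fin n => F with hμdef
  haveI hμP : IsProbabilityMeasure μ := by infer_instance
  set C : ℝ := (n : ℝ) * rtail F b with hCdef
  have hC0 : 0 ≤ C := by positivity
  have hbdd : ∀ x, |Zdom F n b x| ≤ C := fun x => by
    rw [abs_of_nonneg (Zdom_nonneg F n b x)]; exact Zdom_le F n b x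
  have hintμ : Integrable (Zdom F n b) μ :=
    integrable_of_bdd μ (measurable_Zdom F n b) C hbdd
  have hint : ∀ i : Fin n, Integrable (Zdom F n b)
      (Measure.pi (fun j : Fin n => if j = i then F[|Set.Ioi b] else F)) := fun i => by
    haveI := hPi i
    exact integrable_of_bdd _ (measurable_Zdom F n b) C hbdd
  have hμA := measurableSet_Adom n b
  have hrt0 : rtail F b ≠ 0 := ne_of_gt hFb
  have hn0 : (n : ℝ) ≠ 0 := Nat.cast_ne_zero.mpr hn.ne'
  haveI hPt : IsProbabilityMeasure (Ptilde F n b) := by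
    constructor
    rw [Ptilde, Measure.smul_apply, Measure.finset_sum_apply]
    have : ∀ i : Fin n, Measure.pi (fun j : Fin n => if j = i then F[|Set.Ioi b] else F)
        Set.univ = 1 := fun i => (hPi i).measure_univ
    rw [Finset.sum_congr rfl fun i _ => this i]
    simp only [Finset.sum_const, Finset.card_univ, Fintype.card_fin, nsmul_eq_mul, mul_one,
      smul_eq_mul]
    rw [ENNReal.inv_mul_cancel (by exact_mod_cast hn.ne') (ENNReal.natCast_ne_top n)]
  constructor
  · rw [Ptilde, integral_smul_measure, integral_finset_sum_measure (fun i _ => hint i)]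
    have heach : ∀ i : Fin n,
        (∫ x, Zdom F n b x ∂(Measure.pi (fun j : Fin n => if j = i then F[|Set.Ioi b] else F)))
          = (rtail F b)⁻¹ * ∫ x, ({y : Fin n → ℝ | y i > b}).indicator (Zdom F n b) x ∂μ := by
      intro i
      rw [pi_cond_eq F b hFb0 n i, integral_smul_measure, smul_eq_mul,
        ENNReal.toReal_inv, ← integral_indicator (hS i)]
      rfl
    rw [Finset.sum_congr rfl fun i _ => heach i, ← Finset.mul_sum,
      ← integral_finset_sum _ (fun i _ => hintμ.indicator (hS i))]
    simp_rw [sum_indicator_Zdom]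
    rw [integral_indicator_const _ hμA, smul_eq_mul]
    have : ((n : ENNReal))⁻¹.toReal = (n : ℝ)⁻¹ := by
      simp [ENNReal.toReal_inv]
    rw [this, smul_eq_mul]
    field_simp
    rfl
  · have hint2 : Integrable (fun x => Zdom F n b x ^ 2) (Ptilde F n b) :=
      integrable_of_bdd _ ((measurable_Zdom F n b).pow_const 2) (C ^ 2) (fun x => by
        rw [abs_of_nonneg (by positivity)]
        exact pow_le_pow_left₀ (Zdom_nonneg F n b x) (Zdom_le F n b x) 2)
    calc (∫ x, Zdom F n b x ^ 2 ∂(Ptilde F n b)) ≤ ∫ _, C ^ 2 ∂(Ptilde F n b) :=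
          integral_mono hint2 (integrable_const _) (fun x =>
            pow_le_pow_left₀ (Zdom_nonneg F n b x) (Zdom_le F n b x) 2)
      _ = C ^ 2 := by simp
end
end

section
/- The estimator Z_res is unbiased for P(A_res) under the exponentially twisted measure P_θ, and its second moment satisfies ∫ Z_res dP_θ = F^{⊗n}(A_res) and ∫ Z_res² dP_θ ≤ nF̄(b)·exp(nΛ_b(θ_{n,b}))·F^{⊗n}(A_res). -/
open MeasureTheory ProbabilityTheory Filter
open scoped Classical
open scoped ENNReal NNReal

noncomputable section

/-- The truncated log-moment generating function `Λ_b(θ) = log ∫_{(-∞,b]} e^{θx} dF(x)`. -/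
def Lam (F : Measure ℝ) (b θ : ℝ) : ℝ :=
  Real.log (∫ x in Set.Iic b, Real.exp (θ * x) ∂F)

/-- The truncated exponentially twisted measure `F_θ`, with density
`exp(θ_{n,b} x − Λ_b(θ_{n,b})) 1(x < b)` with respect to `F`. -/
def Ftheta (F : Measure ℝ) (n : ℕ) (b : ℝ) : Measure ℝ :=
  F.withDensity (fun x =>
    ENNReal.ofReal (if x < b then Real.exp (theta F n b * x - Lam F b (theta F n b)) else 0))

/-- The residual event `A_res = {x ∈ ℝⁿ : x₁+⋯+xₙ > b and max_j x_j < b}`. -/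
def Ares (n : ℕ) (b : ℝ) : Set (Fin n → ℝ) :=
  {x | (∑ j, x j) > b ∧ ∀ j, x j < b}

/-- The estimator `Z_res(x) = exp(−θ_{n,b}(x₁+⋯+xₙ) + n Λ_b(θ_{n,b})) 1_{A_res}(x)`. -/
def Zres (F : Measure ℝ) (n : ℕ) (b : ℝ) (x : Fin n → ℝ) : ℝ :=
  if x ∈ Ares n b then
    Real.exp (-(theta F n b) * (∑ j, x j) + (n : ℝ) * Lam F b (theta F n b))
  else 0

lemma lintegral_pi_prod_fin (μ : Measure ℝ) [IsFiniteMeasure μ] :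
    ∀ (n : ℕ) (f : Fin n → ℝ → ℝ≥0∞), (∀ j, Measurable (f j)) →
    ∫⁻ x, ∏ j, f j (x j) ∂(Measure.pi fun _ : Fin n => μ) = ∏ j, ∫⁻ y, f j y ∂μ := by
  intro n
  induction n with
  | zero =>
    intro f hf
    rw [Measure.pi_of_empty]
    simp
  | succ n ih =>
    intro f hf
    have hmp := measurePreserving_piFinSuccAbove (fun _ : Fin (n + 1) => μ) 0
    set e := MeasurableEquiv.piFinSuccAbove (fun _ : Fin (n + 1) => ℝ) 0
    have hgmeas : Measurable (fun p : ℝ × (Fin n → ℝ) =>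
        f 0 p.1 * ∏ j : Fin n, f j.succ (p.2 j)) := by
      refine Measurable.mul ((hf 0).comp measurable_fst) ?_
      exact Finset.measurable_prod _ fun j _ =>
        (hf j.succ).comp ((measurable_pi_apply j).comp measurable_snd)
    have hex : ∀ x : Fin (n + 1) → ℝ, e x = (x 0, fun j => x j.succ) := by
      intro x
      ext <;> simp [e, MeasurableEquiv.piFinSuccAbove, Fin.insertNthEquiv, Fin.removeNth, Fin.tail]
    have hcomp : ∀ x : Fin (n + 1) → ℝ,
        (fun p : ℝ × (Fin n → ℝ) => f 0 p.1 * ∏ j : Fin n, f j.succ (p.2 j)) (e x)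
          = ∏ j, f j (x j) := by
      intro x
      rw [hex x, Fin.prod_univ_succ]
    calc ∫⁻ x, ∏ j, f j (x j) ∂(Measure.pi fun _ : Fin (n + 1) => μ)
        = ∫⁻ x, (fun p : ℝ × (Fin n → ℝ) => f 0 p.1 * ∏ j : Fin n, f j.succ (p.2 j)) (e x)
            ∂(Measure.pi fun _ : Fin (n + 1) => μ) := by
          refine lintegral_congr fun x => (hcomp x).symm
      _ = ∫⁻ p, f 0 p.1 * ∏ j : Fin n, f j.succ (p.2 j)
            ∂(μ.prod (Measure.pi fun _ : Fin n => μ)) := hmp.lintegral_comp hgmeas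
      _ = (∫⁻ y, f 0 y ∂μ) * ∫⁻ x, ∏ j : Fin n, f j.succ (x j)
            ∂(Measure.pi fun _ : Fin n => μ) := by
          exact lintegral_prod_mul (hf 0).aemeasurable
            (Finset.measurable_prod _ fun (j : Fin n) _ =>
              (hf j.succ).comp (measurable_pi_apply j)).aemeasurable
      _ = ∏ j, ∫⁻ y, f j y ∂μ := by
          rw [ih _ fun j => hf j.succ, Fin.prod_univ_succ]

lemma pi_withDensity_fin (n : ℕ) (μ : Measure ℝ) [IsFiniteMeasure μ]
    (g : ℝ → ℝ≥0∞) (hg : Measurable g) (hfin : ∫⁻ x, g x ∂μ ≠ ⊤) :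
    Measure.pi (fun _ : Fin n => μ.withDensity g)
      = (Measure.pi fun _ : Fin n => μ).withDensity (fun x => ∏ j, g (x j)) := by
  haveI : IsFiniteMeasure (μ.withDensity g) := isFiniteMeasure_withDensity hfin
  refine Measure.pi_eq fun s hs => ?_
  rw [withDensity_apply _ (MeasurableSet.univ_pi hs),
    ← lintegral_indicator (MeasurableSet.univ_pi hs)]
  have hind : ∀ x : Fin n → ℝ,
      (Set.univ.pi s).indicator (fun x => ∏ j, g (x j)) x
        = ∏ j, (s j).indicator g (x j) := by
    intro x
    by_cases hx : x ∈ Set.univ.pi s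
    · rw [Set.indicator_of_mem hx]
      exact Finset.prod_congr rfl fun j _ =>
        (Set.indicator_of_mem (hx j (Set.mem_univ j)) g).symm
    · rw [Set.indicator_of_notMem hx]
      obtain ⟨j, hj⟩ : ∃ j, x j ∉ s j := by
        by_contra h
        push_neg at h
        exact hx fun j _ => h j
      exact (Finset.prod_eq_zero (Finset.mem_univ j)
        (Set.indicator_of_notMem hj g)).symm
  simp_rw [hind]
  rw [lintegral_pi_prod_fin μ n _ fun j => hg.indicator (hs j)]
  exact Finset.prod_congr rfl fun j _ => by
    rw [lintegral_indicator (hs j), withDensity_apply _ (hs j)]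
/-- `Z_res` is unbiased for `P(A_res)` under `P_θ = F_θ^{⊗n}`, and
`∫ Z_res² dP_θ ≤ n F̄(b) exp(n Λ_b(θ_{n,b})) P(A_res)`. -/
theorem stmt5
    (F : Measure ℝ) [IsProbabilityMeasure F] [NullSingletonClass F]
    (n : ℕ) (hn : 0 < n) (b : ℝ) (hb : 0 < b)
    (hFb : 0 < (n : ℝ) * rtail F b) (hFb1 : (n : ℝ) * rtail F b < 1) :
    (∫ x, Zres F n b x ∂(Measure.pi fun _ : Fin n => Ftheta F n b)) =
      ((Measure.pi fun _ : Fin n => F) (Ares n b)).toReal ∧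
    (∫ x, (Zres F n b x) ^ 2 ∂(Measure.pi fun _ : Fin n => Ftheta F n b)) ≤
      (n : ℝ) * rtail F b * Real.exp ((n : ℝ) * Lam F b (theta F n b)) *
        ((Measure.pi fun _ : Fin n => F) (Ares n b)).toReal := by
  classical
  set θ : ℝ := theta F n b with hθdef
  set Λ : ℝ := Lam F b (theta F n b) with hΛdef
  have hθpos : 0 < θ := by
    have hlog : Real.log ((n : ℝ) * rtail F b) < 0 := Real.log_neg hFb hFb1
    exact div_pos (by linarith) hb
  have hexpθb : Real.exp (-(θ * b)) = (n : ℝ) * rtail F b := by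
    have hbne : b ≠ 0 := ne_of_gt hb
    have h1 : θ * b = -Real.log ((n : ℝ) * rtail F b) := by
      rw [hθdef]; unfold theta; field_simp
    rw [h1, neg_neg, Real.exp_log hFb]
  set g : ℝ → ℝ≥0∞ := fun x =>
    ENNReal.ofReal (if x < b then Real.exp (θ * x - Λ) else 0) with hgdef
  have hFtheta : Ftheta F n b = F.withDensity g := rfl
  have hg : Measurable g := by
    apply Measurable.ennreal_ofReal
    exact Measurable.ite measurableSet_Iio
      (Real.measurable_exp.comp ((measurable_id.const_mul θ).sub measurable_const))
      measurable_const
  have hgbd : ∀ x, g x ≤ ENNReal.ofReal (Real.exp (θ * b - Λ)) := by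
    intro x
    rw [hgdef]
    dsimp only
    split_ifs with h
    · exact ENNReal.ofReal_le_ofReal (Real.exp_le_exp.2 (by nlinarith))
    · simp
  have hfin : ∫⁻ x, g x ∂F ≠ ⊤ := by
    refine ne_top_of_le_ne_top (by simp : (ENNReal.ofReal (Real.exp (θ * b - Λ)) * F Set.univ ≠ ⊤)) ?_
    calc ∫⁻ x, g x ∂F ≤ ∫⁻ _, ENNReal.ofReal (Real.exp (θ * b - Λ)) ∂F := lintegral_mono hgbd
      _ = ENNReal.ofReal (Real.exp (θ * b - Λ)) * F Set.univ := lintegral_const _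
  haveI : IsFiniteMeasure (Ftheta F n b) := by
    rw [hFtheta]; exact isFiniteMeasure_withDensity hfin
  set D : (Fin n → ℝ) → ℝ≥0∞ := fun x => ∏ j, g (x j) with hDdef
  have hD : Measurable D :=
    Finset.measurable_prod _ fun j _ => hg.comp (measurable_pi_apply j)
  have hpi : Measure.pi (fun _ : Fin n => Ftheta F n b)
      = (Measure.pi fun _ : Fin n => F).withDensity D := by
    rw [hFtheta]; exact pi_withDensity_fin n F g hg hfin
  have hA : MeasurableSet (Ares n b) := by
    have hAeq : Ares n b = {x : Fin n → ℝ | b < ∑ j, x j} ∩ ⋂ j, {x | x j < b} := by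
      ext x; simp [Ares, Set.mem_iInter]
    rw [hAeq]
    exact (measurableSet_lt measurable_const
        (Finset.measurable_sum _ fun j _ => measurable_pi_apply j)).inter
      (MeasurableSet.iInter fun j =>
        measurableSet_lt (measurable_pi_apply j) measurable_const)
  have hEmeas : Measurable (fun x : Fin n → ℝ =>
      Real.exp (-θ * (∑ j, x j) + (n : ℝ) * Λ)) :=
    Real.measurable_exp.comp
      (((Finset.measurable_sum _ fun j _ => measurable_pi_apply j).const_mul (-θ)).add
        measurable_const)
  have hZmeas : Measurable (Zres F n b) := by
    unfold Zres
    exact Measurable.ite hA hEmeas measurable_const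
  have hZnonneg : ∀ x, 0 ≤ Zres F n b x := by
    intro x; unfold Zres; split_ifs
    · exact (Real.exp_pos _).le
    · exact le_refl 0
  -- product of densities on Ares
  have hprodA : ∀ x : Fin n → ℝ, x ∈ Ares n b →
      D x = ENNReal.ofReal (Real.exp (θ * (∑ j, x j) - (n : ℝ) * Λ)) := by
    intro x hx
    have h1 : ∀ j, g (x j) = ENNReal.ofReal (Real.exp (θ * x j - Λ)) := by
      intro j; rw [hgdef]; dsimp only; rw [if_pos (hx.2 j)]
    calc D x = ∏ j, ENNReal.ofReal (Real.exp (θ * x j - Λ)) :=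
        Finset.prod_congr rfl fun j _ => h1 j
      _ = ENNReal.ofReal (∏ j, Real.exp (θ * x j - Λ)) :=
        (ENNReal.ofReal_prod_of_nonneg fun j _ => (Real.exp_pos _).le).symm
      _ = ENNReal.ofReal (Real.exp (∑ j, (θ * x j - Λ))) := by rw [Real.exp_sum]
      _ = ENNReal.ofReal (Real.exp (θ * (∑ j, x j) - (n : ℝ) * Λ)) := by
        congr 1
        rw [Finset.sum_sub_distrib, ← Finset.mul_sum, Finset.sum_const,
          Finset.card_univ, Fintype.card_fin, nsmul_eq_mul]
  have hkey1 : ∀ x : Fin n → ℝ,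
      ENNReal.ofReal (Zres F n b x) * D x = (Ares n b).indicator 1 x := by
    intro x
    by_cases hx : x ∈ Ares n b
    · rw [Set.indicator_of_mem hx, hprodA x hx]
      unfold Zres
      rw [if_pos hx, ← ENNReal.ofReal_mul (Real.exp_pos _).le, ← Real.exp_add]
      have : -θ * (∑ j, x j) + (n : ℝ) * Λ + (θ * (∑ j, x j) - (n : ℝ) * Λ) = 0 := by ring
      rw [hθdef, hΛdef] at this ⊢
      rw [this, Real.exp_zero, ENNReal.ofReal_one, Pi.one_apply]
    · unfold Zres
      rw [if_neg hx, Set.indicator_of_notMem hx]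
      simp
  have hkey2 : ∀ x : Fin n → ℝ,
      ENNReal.ofReal ((Zres F n b x) ^ 2) * D x
        = (Ares n b).indicator
            (fun y => ENNReal.ofReal (Real.exp (-θ * (∑ j, y j) + (n : ℝ) * Λ))) x := by
    intro x
    by_cases hx : x ∈ Ares n b
    · rw [Set.indicator_of_mem hx, hprodA x hx]
      unfold Zres
      rw [if_pos hx, ← Real.exp_nat_mul, ← ENNReal.ofReal_mul (Real.exp_pos _).le,
        ← Real.exp_add]
      have : (2 : ℕ) * (-θ * (∑ j, x j) + (n : ℝ) * Λ) + (θ * (∑ j, x j) - (n : ℝ) * Λ)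
          = -θ * (∑ j, x j) + (n : ℝ) * Λ := by push_cast; ring
      rw [hθdef, hΛdef] at this ⊢
      rw [this]
    · unfold Zres
      rw [if_neg hx, Set.indicator_of_notMem hx]
      simp
  constructor
  · rw [integral_eq_lintegral_of_nonneg_ae (ae_of_all _ hZnonneg)
      hZmeas.aestronglyMeasurable, hpi,
      lintegral_withDensity_eq_lintegral_mul _ hD
        (hZmeas.ennreal_ofReal)]
    have : ∀ x, (D * fun a => ENNReal.ofReal (Zres F n b a)) x
        = (Ares n b).indicator 1 x := by
      intro x
      rw [Pi.mul_apply, mul_comm]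
      exact hkey1 x
    rw [lintegral_congr this, lintegral_indicator_one hA]
  · rw [integral_eq_lintegral_of_nonneg_ae
      (ae_of_all _ fun x => sq_nonneg (Zres F n b x))
      ((hZmeas.pow_const 2).aestronglyMeasurable), hpi,
      lintegral_withDensity_eq_lintegral_mul _ hD
        ((hZmeas.pow_const 2).ennreal_ofReal)]
    have hcongr : ∀ x, (D * fun a => ENNReal.ofReal (Zres F n b a ^ 2)) x
        = (Ares n b).indicator
            (fun y => ENNReal.ofReal (Real.exp (-θ * (∑ j, y j) + (n : ℝ) * Λ))) x := by
      intro x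
      rw [Pi.mul_apply, mul_comm]
      exact hkey2 x
    rw [lintegral_congr hcongr]
    set C : ℝ := (n : ℝ) * rtail F b * Real.exp ((n : ℝ) * Λ) with hCdef
    have hCnonneg : 0 ≤ C := by positivity
    have hbound : ∫⁻ x, (Ares n b).indicator
        (fun y => ENNReal.ofReal (Real.exp (-θ * (∑ j, y j) + (n : ℝ) * Λ))) x
        ∂(Measure.pi fun _ : Fin n => F)
        ≤ ENNReal.ofReal C * (Measure.pi fun _ : Fin n => F) (Ares n b) := by
      have hptw : ∀ x, (Ares n b).indicator
          (fun y => ENNReal.ofReal (Real.exp (-θ * (∑ j, y j) + (n : ℝ) * Λ))) x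
          ≤ (Ares n b).indicator (fun _ => ENNReal.ofReal C) x := by
        intro x
        by_cases hx : x ∈ Ares n b
        swap
        · simp [Set.indicator_of_notMem hx]
        rw [Set.indicator_of_mem hx, Set.indicator_of_mem hx]
        refine ENNReal.ofReal_le_ofReal ?_
        have hS : b < ∑ j, x j := hx.1
        have : -θ * (∑ j, x j) + (n : ℝ) * Λ ≤ -(θ * b) + (n : ℝ) * Λ := by nlinarith
        calc Real.exp (-θ * (∑ j, x j) + (n : ℝ) * Λ)
            ≤ Real.exp (-(θ * b) + (n : ℝ) * Λ) := Real.exp_le_exp.2 this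
          _ = Real.exp (-(θ * b)) * Real.exp ((n : ℝ) * Λ) := Real.exp_add _ _
          _ = C := by rw [hexpθb, hCdef]
      calc ∫⁻ x, (Ares n b).indicator
            (fun y => ENNReal.ofReal (Real.exp (-θ * (∑ j, y j) + (n : ℝ) * Λ))) x
            ∂(Measure.pi fun _ : Fin n => F)
          ≤ ∫⁻ x, (Ares n b).indicator (fun _ => ENNReal.ofReal C) x
            ∂(Measure.pi fun _ : Fin n => F) := lintegral_mono hptw
        _ = ENNReal.ofReal C * (Measure.pi fun _ : Fin n => F) (Ares n b) :=
          lintegral_indicator_const hA _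
    have hne : ENNReal.ofReal C * (Measure.pi fun _ : Fin n => F) (Ares n b) ≠ ⊤ :=
      ENNReal.mul_ne_top ENNReal.ofReal_ne_top (measure_ne_top _ _)
    calc (∫⁻ x, (Ares n b).indicator
          (fun y => ENNReal.ofReal (Real.exp (-θ * (∑ j, y j) + (n : ℝ) * Λ))) x
          ∂(Measure.pi fun _ : Fin n => F)).toReal
        ≤ (ENNReal.ofReal C * (Measure.pi fun _ : Fin n => F) (Ares n b)).toReal :=
          ENNReal.toReal_mono hne hbound
      _ = C * ((Measure.pi fun _ : Fin n => F) (Ares n b)).toReal := by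
          rw [ENNReal.toReal_mul, ENNReal.toReal_ofReal hCnonneg]
end
end

section
/- If 1<α<1.5, then there exists b₀ such that for every b>b₀, every strictly increasing sequence of positive integers n_1<n_2<⋯ (with n_0:=0), and every sequence (p_k)_{k≥1} of positive reals with Σ_{k≥1}p_k=1, the product ( Σ_{k≥1} P(n_{k-1}<τ_b≤n_k)²/p_k ) · ( Σ_{k≥1} p_k·n_k ) is infinite; in particular no such randomization can make the estimator's second moment and the expected termination time simultaneously finite. -/
open MeasureTheory ProbabilityTheory Filter

noncomputable section

/-- The random walk `S_n = X_1 + ⋯ + X_n` (increments indexed from `1`). -/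
def walk {Ω : Type*} (X : ℕ → Ω → ℝ) (n : ℕ) (ω : Ω) : ℝ :=
  ∑ i ∈ Finset.Icc 1 n, X i ω

/-- The event `{m₁ < τ_b ≤ m₂}`, where `τ_b = inf{n ≥ 1 : S_n − nμ > b}`. -/
def blockEvent {Ω : Type*} (X : ℕ → Ω → ℝ) (μ b : ℝ) (m₁ m₂ : ℕ) : Set Ω :=
  {ω | ∃ m, m₁ < m ∧ m ≤ m₂ ∧ walk X m ω - m * μ > b ∧
    ∀ j, 1 ≤ j → j < m → walk X j ω - j * μ ≤ b}


open scoped ENNReal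

/-- The event `{τ_b = m}`. -/
def hitAt {Ω : Type*} (X : ℕ → Ω → ℝ) (μ b : ℝ) (m : ℕ) : Set Ω :=
  {ω | walk X m ω - m * μ > b ∧ ∀ j, 1 ≤ j → j < m → walk X j ω - j * μ ≤ b}

section Aux

set_option linter.unusedSectionVars false
set_option linter.unusedVariables false

variable {Ω : Type*} [MeasurableSpace Ω] {X : ℕ → Ω → ℝ} {μ b : ℝ}

lemma measurable_walk (hX : ∀ i, Measurable (X i)) (n : ℕ) : Measurable (walk X n) :=
  Finset.measurable_sum _ fun i _ => hX i

lemma measurableSet_hitAt (hX : ∀ i, Measurable (X i)) (m : ℕ) :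
    MeasurableSet (hitAt X μ b m) := by
  have h1 : MeasurableSet {ω | walk X m ω - m * μ > b} :=
    measurableSet_lt measurable_const ((measurable_walk hX m).sub measurable_const)
  have h2 : MeasurableSet {ω | ∀ j, 1 ≤ j → j < m → walk X j ω - j * μ ≤ b} := by
    have : {ω | ∀ j, 1 ≤ j → j < m → walk X j ω - j * μ ≤ b} =
        ⋂ (j : ℕ) (_ : 1 ≤ j) (_ : j < m), {ω | walk X j ω - j * μ ≤ b} := by
      ext ω; simp [Set.mem_iInter]
    rw [this]
    exact MeasurableSet.iInter fun j => MeasurableSet.iInter fun _ =>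
      MeasurableSet.iInter fun _ =>
        measurableSet_le ((measurable_walk hX j).sub measurable_const) measurable_const
  exact h1.inter h2

lemma hitAt_disjoint {m m' : ℕ} (hm : 1 ≤ m) (hmm : m < m') :
    Disjoint (hitAt X μ b m) (hitAt X μ b m') := by
  rw [Set.disjoint_left]
  rintro ω ⟨h1, -⟩ ⟨-, h2⟩
  exact absurd (h2 m hm hmm) (not_le.2 h1)

lemma hitAt_subset_block {m m₁ m₂ : ℕ} (h1 : m₁ < m) (h2 : m ≤ m₂) :
    hitAt X μ b m ⊆ blockEvent X μ b m₁ m₂ :=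
  fun ω hω => ⟨m, h1, h2, hω.1, hω.2⟩

lemma walk_succ (n : ℕ) (ω : Ω) : walk X (n + 1) ω = walk X n ω + X (n + 1) ω := by
  unfold walk
  rw [Finset.sum_Icc_succ_top (Nat.le_add_left 1 n)]

lemma sum_hitAt_le_block (P : Measure Ω) [IsProbabilityMeasure P]
    (hX : ∀ i, Measurable (X i)) (m₁ m₂ : ℕ) :
    ∑ m ∈ Finset.Ioc m₁ m₂, (P (hitAt X μ b m)).toReal
      ≤ (P (blockEvent X μ b m₁ m₂)).toReal := by
  rw [← ENNReal.toReal_sum (fun m _ => measure_ne_top _ _)]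
  apply ENNReal.toReal_mono (measure_ne_top _ _)
  rw [← measure_biUnion_finset ?_ (fun m _ => measurableSet_hitAt hX m)]
  · exact measure_mono (Set.iUnion₂_subset fun m hm =>
      hitAt_subset_block (Finset.mem_Ioc.1 hm).1 (Finset.mem_Ioc.1 hm).2)
  · intro m hm m' hm' hne
    rcases lt_or_gt_of_ne hne with h | h
    · exact hitAt_disjoint (Nat.one_le_iff_ne_zero.2 (by
        have := (Finset.mem_Ioc.1 hm).1; omega)) h
    · exact (hitAt_disjoint (Nat.one_le_iff_ne_zero.2 (by
        have := (Finset.mem_Ioc.1 hm').1; omega)) h).symm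


lemma ae_tendsto_walk (P : Measure Ω) [IsProbabilityMeasure P] (F : Measure ℝ)
    (hX : ∀ i, Measurable (X i))
    (hindep : iIndepFun X P)
    (hdist : ∀ i, Measure.map (X i) P = F)
    (hmeanInt : Integrable (fun x => x) F) (hmean : ∫ x, x ∂F = 0) :
    ∀ᵐ ω ∂P, Tendsto (fun n : ℕ => (walk X n ω) / n) atTop (nhds 0) := by
  have hYint : Integrable (X 1) P := by
    have h := (integrable_map_measure (f := X 1) (g := fun x : ℝ => x)
      (by rw [hdist]; exact hmeanInt.1) (hX 1).aemeasurable).mp (by rw [hdist]; exact hmeanInt)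
    exact h
  have hYindep : Pairwise (Function.onFun (IndepFun · · P) fun i => X (i + 1)) :=
    fun i j hij => hindep.indepFun (by omega)
  have hYident : ∀ i, IdentDistrib (fun ω => X (i + 1) ω) (fun ω => X (0 + 1) ω) P P :=
    fun i => ⟨(hX _).aemeasurable, (hX _).aemeasurable, by rw [show (fun ω => X (i+1) ω) = X (i+1) from rfl, hdist, hdist]⟩
  have hmean' : (∫ ω, X (0 + 1) ω ∂P) = 0 := by
    have h2 : ∫ x, (fun x : ℝ => x) x ∂(Measure.map (X 1) P)
        = ∫ ω, (fun x : ℝ => x) (X 1 ω) ∂P :=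
      integral_map (hX 1).aemeasurable measurable_id.aestronglyMeasurable
    rw [hdist] at h2
    simp only [] at h2
    rw [show (fun ω => X (0+1) ω) = X 1 from rfl, ← h2]
    exact hmean
  have := strong_law_ae_real (fun i => X (i + 1)) hYint hYindep hYident
  rw [hmean'] at this
  filter_upwards [this] with ω hω
  have hsum : ∀ n : ℕ, (∑ i ∈ Finset.range n, X (i + 1) ω) = walk X n ω := by
    intro n
    rw [walk, ← Finset.Ico_add_one_right_eq_Icc, Finset.sum_Ico_eq_sum_range]
    simp [add_comm]
  simpa [hsum] using hω

lemma mem_iUnion_ub (hμ : 0 < μ) (ω : Ω)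
    (hω : Tendsto (fun n : ℕ => (walk X n ω) / n) atTop (nhds 0)) :
    ∃ j : ℕ, ∀ m : ℕ, 1 ≤ m → walk X m ω - m * μ ≤ (j : ℝ) := by
  obtain ⟨N, hN⟩ := eventually_atTop.mp (hω.eventually_lt_const hμ)
  set c := ∑ m ∈ Finset.Icc 1 N, |walk X m ω - m * μ| with hc
  have hc0 : 0 ≤ c := Finset.sum_nonneg fun m _ => abs_nonneg _
  refine ⟨⌈c⌉₊, fun m hm => ?_⟩
  rcases le_or_gt m N with h | h
  · calc walk X m ω - m * μ ≤ |walk X m ω - m * μ| := le_abs_self _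
      _ ≤ c := Finset.single_le_sum (f := fun m => |walk X m ω - m * μ|)
          (fun i _ => abs_nonneg _) (Finset.mem_Icc.2 ⟨hm, h⟩)
      _ ≤ ⌈c⌉₊ := Nat.le_ceil c
  · have hmpos : (0:ℝ) < m := by exact_mod_cast hm
    have := hN m h.le
    have : walk X m ω < μ * m := by
      have := (div_lt_iff₀ hmpos).mp this; linarith
    have : walk X m ω - m * μ ≤ 0 := by nlinarith
    calc walk X m ω - m * μ ≤ 0 := this
      _ ≤ (⌈c⌉₊ : ℝ) := by positivity

lemma mem_iUnion_lb (hμ : 0 < μ) (ω : Ω)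
    (hω : Tendsto (fun n : ℕ => (walk X n ω) / n) atTop (nhds 0)) :
    ∃ N : ℕ, ∀ m : ℕ, N ≤ m → -(μ * m) ≤ walk X m ω := by
  obtain ⟨N, hN⟩ := eventually_atTop.mp (hω.eventually_const_lt (neg_neg_iff_pos.mpr hμ))
  refine ⟨max N 1, fun m hm => ?_⟩
  have h1 : N ≤ m := le_trans (le_max_left _ _) hm
  have hmpos : (0:ℝ) < m := by
    have : 1 ≤ m := le_trans (le_max_right _ _) hm
    exact_mod_cast this
  have := hN m h1
  have := (lt_div_iff₀ hmpos).mp this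
  nlinarith


lemma inter_prob (P : Measure Ω) [IsProbabilityMeasure P] {A B : Set Ω}
    (hA : MeasurableSet A) (hB : MeasurableSet B)
    (ha : (3/4 : ℝ) < (P A).toReal) (hb : (3/4 : ℝ) < (P B).toReal) :
    (1/2 : ℝ) ≤ (P (A ∩ B)).toReal := by
  have hreal : ∀ s : Set Ω, MeasurableSet s → (P sᶜ).toReal = 1 - (P s).toReal := by
    intro s hs
    rw [prob_compl_eq_one_sub hs, ENNReal.toReal_sub_of_le prob_le_one ENNReal.one_ne_top,
      ENNReal.toReal_one]
  have hsub : P (A ∩ B)ᶜ ≤ P Aᶜ + P Bᶜ := by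
    rw [Set.compl_inter]; exact measure_union_le _ _
  have h2 : (P (A ∩ B)ᶜ).toReal ≤ (P Aᶜ).toReal + (P Bᶜ).toReal := by
    refine le_trans (ENNReal.toReal_mono ?_ hsub) ?_
    · exact ENNReal.add_ne_top.2 ⟨measure_ne_top _ _, measure_ne_top _ _⟩
    · rw [ENNReal.toReal_add (measure_ne_top _ _) (measure_ne_top _ _)]
  rw [hreal _ (hA.inter hB)] at h2
  rw [hreal _ hA, hreal _ hB] at h2
  linarith

lemma exists_good (P : Measure Ω) [IsProbabilityMeasure P] (hX : ∀ i, Measurable (X i))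
    (hμ : 0 < μ)
    (hub : ∀ᵐ ω ∂P, ∃ j : ℕ, ∀ m : ℕ, 1 ≤ m → walk X m ω - m * μ ≤ (j : ℝ))
    (hlb : ∀ᵐ ω ∂P, ∃ N : ℕ, ∀ m : ℕ, N ≤ m → -(μ * m) ≤ walk X m ω) :
    ∃ j₀ : ℕ, ∀ b : ℝ, (j₀ : ℝ) < b → ∃ N : ℕ, 1 ≤ N ∧ ∀ n : ℕ, N ≤ n →
      (1/2 : ℝ) ≤
        (P {ω | (∀ j, 1 ≤ j → j ≤ n → walk X j ω - j * μ ≤ b) ∧ -(μ * n) ≤ walk X n ω}).toReal := by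
  set E : ℕ → Set Ω := fun j => {ω | ∀ m : ℕ, 1 ≤ m → walk X m ω - m * μ ≤ (j : ℝ)} with hE
  set G : ℕ → Set Ω := fun N => {ω | ∀ m : ℕ, N ≤ m → -(μ * m) ≤ walk X m ω} with hG
  have hEmeas : ∀ j, MeasurableSet (E j) := by
    intro j
    have : E j = ⋂ (m : ℕ) (_ : 1 ≤ m), {ω | walk X m ω - m * μ ≤ (j:ℝ)} := by
      ext ω; simp [hE]
    rw [this]
    exact MeasurableSet.iInter fun m => MeasurableSet.iInter fun _ =>
      measurableSet_le ((measurable_walk hX m).sub measurable_const) measurable_const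
  have hGmeas : ∀ N, MeasurableSet (G N) := by
    intro N
    have : G N = ⋂ (m : ℕ) (_ : N ≤ m), {ω | -(μ * m) ≤ walk X m ω} := by
      ext ω; simp [hG]
    rw [this]
    exact MeasurableSet.iInter fun m => MeasurableSet.iInter fun _ =>
      measurableSet_le measurable_const (measurable_walk hX m)
  have hEmono : Monotone E := by
    intro j j' hj ω hω m hm
    exact le_trans (hω m hm) (by exact_mod_cast hj)
  have hGmono : Monotone G := by
    intro N N' hN ω hω m hm
    exact hω m (le_trans hN hm)
  have hEfull : P (⋃ j, E j) = 1 := by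
    rw [← prob_compl_eq_zero_iff (MeasurableSet.iUnion hEmeas)]
    refine measure_mono_null (fun ω hω => ?_) (ae_iff.mp hub)
    simp only [Set.mem_compl_iff, Set.mem_iUnion] at hω
    exact hω
  have hGfull : P (⋃ N, G N) = 1 := by
    rw [← prob_compl_eq_zero_iff (MeasurableSet.iUnion hGmeas)]
    refine measure_mono_null (fun ω hω => ?_) (ae_iff.mp hlb)
    simp only [Set.mem_compl_iff, Set.mem_iUnion] at hω
    exact hω
  have hEtend : Tendsto (fun j => (P (E j)).toReal) atTop (nhds 1) := by
    have h := tendsto_measure_iUnion_atTop (μ := P) hEmono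
    rw [hEfull] at h
    simpa [Function.comp_def] using (ENNReal.tendsto_toReal ENNReal.one_ne_top).comp h
  have hGtend : Tendsto (fun j => (P (G j)).toReal) atTop (nhds 1) := by
    have h := tendsto_measure_iUnion_atTop (μ := P) hGmono
    rw [hGfull] at h
    simpa [Function.comp_def] using (ENNReal.tendsto_toReal ENNReal.one_ne_top).comp h
  obtain ⟨j₀, hj₀⟩ :=
    (hEtend.eventually (eventually_gt_nhds (by norm_num : (3/4:ℝ) < 1))).exists
  refine ⟨j₀, fun b hb => ?_⟩
  obtain ⟨N, hN⟩ :=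
    (hGtend.eventually (eventually_gt_nhds (by norm_num : (3/4:ℝ) < 1))).exists
  refine ⟨max N 1, le_max_right _ _, fun n hn => ?_⟩
  refine le_trans (inter_prob P (hEmeas j₀) (hGmeas N) hj₀ hN)
    (ENNReal.toReal_mono (measure_ne_top _ _) (measure_mono ?_))
  rintro ω ⟨hω1, hω2⟩
  constructor
  · intro j hj _; exact le_trans (hω1 j hj) hb.le
  · exact hω2 n (le_trans (le_trans (le_max_left _ _) hn) le_rfl)

lemma indep_C_jump (P : Measure Ω) [IsProbabilityMeasure P] (F : Measure ℝ)
    (hX : ∀ i, Measurable (X i)) (hindep : iIndepFun X P)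
    (hdist : ∀ i, Measure.map (X i) P = F) (n : ℕ) (t : ℝ) :
    P ({ω | (∀ j, 1 ≤ j → j ≤ n → walk X j ω - j * μ ≤ b) ∧ -(μ * n) ≤ walk X n ω}
        ∩ {ω | t < X (n + 1) ω})
      = P {ω | (∀ j, 1 ≤ j → j ≤ n → walk X j ω - j * μ ≤ b) ∧ -(μ * n) ≤ walk X n ω}
        * F (Set.Ioi t) := by
  classical
  set S : Finset ℕ := Finset.Icc 1 n with hS
  set T : Finset ℕ := {n + 1} with hT
  have hST : Disjoint S T := by
    rw [Finset.disjoint_singleton_right, hS]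
    simp
  have hIF := hindep.indepFun_finset S T hST hX
  set pS : (S → ℝ) → ℕ → ℝ :=
    fun v j => ∑ i ∈ Finset.univ.filter (fun i : S => (i : ℕ) ≤ j), v i with hpS
  have hpSmeas : ∀ j, Measurable (fun v => pS v j) :=
    fun j => Finset.measurable_sum _ fun i _ => measurable_pi_apply i
  set A : Set (S → ℝ) :=
    {v | (∀ j, 1 ≤ j → j ≤ n → pS v j - j * μ ≤ b) ∧ -(μ * n) ≤ pS v n} with hA
  have hAmeas : MeasurableSet A := by
    have : A = (⋂ (j : ℕ) (_ : 1 ≤ j) (_ : j ≤ n), {v | pS v j - j * μ ≤ b})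
        ∩ {v | -(μ * n) ≤ pS v n} := by
      ext v; simp [hA, Set.mem_iInter]
    rw [this]
    refine MeasurableSet.inter ?_ (measurableSet_le measurable_const (hpSmeas n))
    exact MeasurableSet.iInter fun j => MeasurableSet.iInter fun _ =>
      MeasurableSet.iInter fun _ =>
        measurableSet_le ((hpSmeas j).sub measurable_const) measurable_const
  have hn1T : n + 1 ∈ T := Finset.mem_singleton_self _
  set i0 : {x // x ∈ T} := ⟨n + 1, hn1T⟩ with hi0
  set B : Set (T → ℝ) := (fun v : T → ℝ => v i0) ⁻¹' (Set.Ioi t) with hB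
  have hBmeas : MeasurableSet B := (measurable_pi_apply i0) measurableSet_Ioi
  have key : ∀ (ω : Ω) (j : ℕ), j ≤ n → pS (fun i : S => X i ω) j = walk X j ω := by
    intro ω j hj
    rw [hpS, walk]
    simp only []
    rw [Finset.sum_filter]
    rw [Finset.sum_coe_sort S (fun i => if i ≤ j then X i ω else 0)]
    rw [← Finset.sum_filter]
    congr 1
    ext i
    simp only [Finset.mem_filter, Finset.mem_Icc, hS]
    omega
  have hCeq : {ω | (∀ j, 1 ≤ j → j ≤ n → walk X j ω - j * μ ≤ b) ∧ -(μ * n) ≤ walk X n ω}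
      = (fun a (i : S) => X i a) ⁻¹' A := by
    ext ω
    simp only [Set.mem_preimage, hA, Set.mem_setOf_eq]
    constructor
    · rintro ⟨h1, h2⟩
      exact ⟨fun j hj1 hj2 => by rw [key ω j hj2]; exact h1 j hj1 hj2,
        by rw [key ω n le_rfl]; exact h2⟩
    · rintro ⟨h1, h2⟩
      exact ⟨fun j hj1 hj2 => by rw [← key ω j hj2]; exact h1 j hj1 hj2,
        by rw [← key ω n le_rfl]; exact h2⟩
  have hDeq : {ω | t < X (n + 1) ω} = (fun a (i : T) => X i a) ⁻¹' B := by
    ext ω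
    simp only [Set.mem_preimage, hB, Set.mem_setOf_eq, Set.mem_Ioi, hi0]
  have hmul := (indepFun_iff_measure_inter_preimage_eq_mul.mp hIF) A B hAmeas hBmeas
  rw [hCeq, hDeq, hmul]
  congr 1
  have : (fun a (i : T) => X i a) ⁻¹' B = X (n + 1) ⁻¹' (Set.Ioi t) := by
    ext ω; simp [hB, hi0]
  rw [this, ← Measure.map_apply (hX (n + 1)) measurableSet_Ioi, hdist]

lemma slow_dyadic (L : ℝ → ℝ) (hLpos : ∀ x > 0, 0 < L x) (hL : SlowlyVarying L)
    {ε : ℝ} (hε : 0 < ε) :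
    ∃ x₁ : ℝ, 1 ≤ x₁ ∧ ∀ x₀, x₁ ≤ x₀ → ∀ k : ℕ,
      ((2:ℝ) ^ (-ε)) ^ k * L x₀ ≤ L (2 ^ k * x₀) := by
  set c : ℝ := (2:ℝ) ^ (-ε) with hc
  have hc1 : c < 1 := Real.rpow_lt_one_of_one_lt_of_neg one_lt_two (neg_neg_iff_pos.2 hε)
  have hc0 : 0 < c := Real.rpow_pos_of_pos two_pos _
  have hev := (hL 2 two_pos).eventually_const_lt hc1
  obtain ⟨x₁', hx₁'⟩ := eventually_atTop.mp hev
  refine ⟨max x₁' 1, le_max_right _ _, fun x₀ hx₀ k => ?_⟩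
  have hx₀1 : (1:ℝ) ≤ x₀ := le_trans (le_max_right _ _) hx₀
  have hx₀0 : (0:ℝ) < x₀ := lt_of_lt_of_le one_pos hx₀1
  have hstep : ∀ x, max x₁' 1 ≤ x → c * L x ≤ L (2 * x) := by
    intro x hx
    have hx0 : (0:ℝ) < x := lt_of_lt_of_le one_pos (le_trans (le_max_right _ _) hx)
    have := hx₁' x (le_trans (le_max_left _ _) hx)
    have hLx : 0 < L x := hLpos x hx0
    rw [lt_div_iff₀ hLx] at this
    linarith
  induction k with
  | zero => simp
  | succ k ih =>
    have h2k : (1:ℝ) ≤ 2 ^ k := one_le_pow₀ one_le_two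
    have hxk : max x₁' 1 ≤ 2 ^ k * x₀ := by nlinarith
    calc c ^ (k+1) * L x₀ = c * (c ^ k * L x₀) := by ring
      _ ≤ c * L (2 ^ k * x₀) := by
          exact mul_le_mul_of_nonneg_left ih hc0.le
      _ ≤ L (2 * (2 ^ k * x₀)) := hstep _ hxk
      _ = L (2 ^ (k+1) * x₀) := by ring_nf
lemma upper_bound (P : Measure Ω) [IsProbabilityMeasure P] (hX : ∀ i, Measurable (X i))
    (n : ℕ → ℕ) (h0 : n 0 = 0) (hmono : StrictMono n)
    (p : ℕ → ℝ) (hp : ∀ k, 0 < p (k + 1))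
    (h1 : Summable fun k : ℕ => (P (blockEvent X μ b (n k) (n (k + 1)))).toReal ^ 2 / p (k + 1))
    (h2 : Summable fun k : ℕ => p (k + 1) * (n (k + 1) : ℝ)) :
    ∃ C : ℝ, ∀ K : ℕ,
      ∑ m ∈ Finset.range K, (P (hitAt X μ b m)).toReal * Real.sqrt m ≤ C := by
  set g : ℕ → ℝ := fun m => (P (hitAt X μ b m)).toReal * Real.sqrt m with hg
  have hgnonneg : ∀ m, 0 ≤ g m := fun m => mul_nonneg ENNReal.toReal_nonneg (Real.sqrt_nonneg _)
  set a : ℕ → ℝ := fun k => (P (blockEvent X μ b (n k) (n (k + 1)))).toReal ^ 2 / p (k + 1)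
    with ha
  set c : ℕ → ℝ := fun k => p (k + 1) * (n (k + 1) : ℝ) with hc
  have key : ∀ k, ∑ m ∈ Finset.Ioc (n k) (n (k + 1)), g m ≤ (a k + c k) / 2 := by
    intro k
    set q := (P (blockEvent X μ b (n k) (n (k + 1)))).toReal with hq
    have hq0 : 0 ≤ q := ENNReal.toReal_nonneg
    set s := Real.sqrt (n (k + 1)) with hs
    have hs0 : 0 ≤ s := Real.sqrt_nonneg _
    have hssq : s ^ 2 = (n (k + 1) : ℝ) := Real.sq_sqrt (by positivity)
    have step1 : ∑ m ∈ Finset.Ioc (n k) (n (k + 1)), g m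
        ≤ ∑ m ∈ Finset.Ioc (n k) (n (k + 1)), (P (hitAt X μ b m)).toReal * s := by
      refine Finset.sum_le_sum fun m hm => ?_
      refine mul_le_mul_of_nonneg_left ?_ ENNReal.toReal_nonneg
      exact Real.sqrt_le_sqrt (by exact_mod_cast (Finset.mem_Ioc.1 hm).2)
    have step2 : ∑ m ∈ Finset.Ioc (n k) (n (k + 1)), (P (hitAt X μ b m)).toReal * s
        ≤ q * s := by
      rw [← Finset.sum_mul]
      exact mul_le_mul_of_nonneg_right (sum_hitAt_le_block P hX _ _) hs0
    have step3 : q * s ≤ (a k + c k) / 2 := by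
      have hpk := hp k
      have e2 : a k = q ^ 2 / p (k + 1) := by simp only [ha, hq]
      have e3 : c k = p (k + 1) * s ^ 2 := by simp only [hc]; rw [hssq]
      have hdiv : 2 * q * s - p (k + 1) * s ^ 2 ≤ q ^ 2 / p (k + 1) := by
        rw [le_div_iff₀ hpk]
        nlinarith [sq_nonneg (q - p (k + 1) * s)]
      rw [e2, e3]
      linarith
    linarith
  have hanonneg : ∀ k, 0 ≤ a k := fun k => div_nonneg (sq_nonneg _) (hp k).le
  have hcnonneg : ∀ k, 0 ≤ c k := fun k => mul_nonneg (hp k).le (Nat.cast_nonneg _)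
  refine ⟨((∑' k, a k) + ∑' k, c k) / 2, fun K => ?_⟩
  have hpart : ∀ K : ℕ, ∑ m ∈ Finset.Ioc 0 (n K), g m
      = ∑ k ∈ Finset.range K, ∑ m ∈ Finset.Ioc (n k) (n (k + 1)), g m := by
    intro K
    induction K with
    | zero => simp [h0]
    | succ K ih =>
      rw [Finset.sum_range_succ, ← ih,
        Finset.sum_Ioc_consecutive g (Nat.zero_le (n K)) (hmono (Nat.lt_succ_self K)).le]
  have hrange : ∑ m ∈ Finset.range K, g m ≤ ∑ m ∈ Finset.Ioc 0 (n K), g m := by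
    have hg0 : g 0 = 0 := by simp [hg]
    rw [← Finset.sum_erase (Finset.range K) hg0]
    refine Finset.sum_le_sum_of_subset_of_nonneg ?_ (fun m _ _ => hgnonneg m)
    intro m hm
    rw [Finset.mem_erase, Finset.mem_range] at hm
    rw [Finset.mem_Ioc]
    exact ⟨Nat.pos_of_ne_zero hm.1, le_trans (Nat.le_of_lt_succ (Nat.lt_succ_of_lt hm.2))
      (hmono.le_apply)⟩
  calc ∑ m ∈ Finset.range K, g m ≤ ∑ m ∈ Finset.Ioc 0 (n K), g m := hrange
    _ = ∑ k ∈ Finset.range K, ∑ m ∈ Finset.Ioc (n k) (n (k + 1)), g m := hpart K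
    _ ≤ ∑ k ∈ Finset.range K, (a k + c k) / 2 := Finset.sum_le_sum fun k _ => key k
    _ = (∑ k ∈ Finset.range K, (a k + c k)) / 2 := by rw [Finset.sum_div]
    _ ≤ ((∑' k, a k) + ∑' k, c k) / 2 := by
        refine div_le_div_of_nonneg_right ?_ (by norm_num)
        rw [Finset.sum_add_distrib]
        exact add_le_add (Summable.sum_le_tsum _ (fun i _ => hanonneg i) h1)
          (Summable.sum_le_tsum _ (fun i _ => hcnonneg i) h2)


/-- One-big-jump lower bound for the hitting probability. -/
lemma hit_lower (P : Measure Ω) [IsProbabilityMeasure P] (F : Measure ℝ)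
    [IsProbabilityMeasure F]
    (hX : ∀ i, Measurable (X i)) (hindep : iIndepFun X P)
    (hdist : ∀ i, Measure.map (X i) P = F)
    (hμ : 0 < μ) (n : ℕ) (t : ℝ) (ht : b + (2 * n + 1) * μ ≤ t)
    (hC : (1/2 : ℝ) ≤ (P {ω | (∀ j, 1 ≤ j → j ≤ n → walk X j ω - j * μ ≤ b)
      ∧ -(μ * n) ≤ walk X n ω}).toReal) :
    (1/2 : ℝ) * rtail F t ≤ (P (hitAt X μ b (n + 1))).toReal := by
  set Cn := {ω | (∀ j, 1 ≤ j → j ≤ n → walk X j ω - j * μ ≤ b) ∧ -(μ * n) ≤ walk X n ω}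
    with hCn
  have hincl : Cn ∩ {ω | t < X (n + 1) ω} ⊆ hitAt X μ b (n + 1) := by
    rintro ω ⟨⟨h1, h2⟩, h3⟩
    simp only [Set.mem_setOf_eq] at h3
    constructor
    · have := walk_succ (X := X) n ω
      push_cast
      nlinarith [h2, h3, ht]
    · intro j hj1 hj2
      exact h1 j hj1 (Nat.lt_succ_iff.mp hj2)
  have hmul := indep_C_jump (μ := μ) (b := b) P F hX hindep hdist n t
  have hle : P Cn * F (Set.Ioi t) ≤ P (hitAt X μ b (n + 1)) := by
    rw [← hmul]
    exact measure_mono hincl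
  have := ENNReal.toReal_mono (measure_ne_top _ _) hle
  rw [ENNReal.toReal_mul] at this
  refine le_trans ?_ this
  unfold rtail
  exact mul_le_mul_of_nonneg_right hC ENNReal.toReal_nonneg

/-- The series `∑ P(τ_b = m) √m` has unbounded partial sums. -/
lemma lower_unbounded (P : Measure Ω) [IsProbabilityMeasure P] (F : Measure ℝ)
    [IsProbabilityMeasure F]
    (hX : ∀ i, Measurable (X i)) (hindep : iIndepFun X P)
    (hdist : ∀ i, Measure.map (X i) P = F)
    {α : ℝ} (hα2 : α < 3/2)
    (L : ℝ → ℝ) (hLpos : ∀ x > 0, 0 < L x) (hL : SlowlyVarying L)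
    (htail : ∀ x > 0, rtail F x = L x * x ^ (-α))
    (hμ : 0 < μ) (hb : 0 < b)
    (N : ℕ) (hN1 : 1 ≤ N)
    (hC : ∀ n : ℕ, N ≤ n → (1/2 : ℝ) ≤ (P {ω | (∀ j, 1 ≤ j → j ≤ n →
        walk X j ω - j * μ ≤ b) ∧ -(μ * n) ≤ walk X n ω}).toReal) :
    ∀ C : ℝ, ∃ K : ℕ, C < ∑ m ∈ Finset.range K,
      (P (hitAt X μ b m)).toReal * Real.sqrt m := by
  intro C
  set g : ℕ → ℝ := fun m => (P (hitAt X μ b m)).toReal * Real.sqrt m with hg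
  have hgnonneg : ∀ m, 0 ≤ g m := fun m => mul_nonneg ENNReal.toReal_nonneg (Real.sqrt_nonneg _)
  set ε : ℝ := (3/2 - α) / 2 with hεdef
  have hε : 0 < ε := by rw [hεdef]; linarith
  obtain ⟨x₁, hx₁1, hx₁⟩ := slow_dyadic L hLpos hL hε
  set x₀ : ℝ := max x₁ (b + 4 * N * μ) with hx₀def
  have hx₀x₁ : x₁ ≤ x₀ := le_max_left _ _
  have hx₀1 : (1:ℝ) ≤ x₀ := le_trans hx₁1 hx₀x₁
  have hx₀0 : (0:ℝ) < x₀ := lt_of_lt_of_le one_pos hx₀1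
  have hx₀b : b + 4 * N * μ ≤ x₀ := le_max_right _ _
  set D : ℝ := 1/2 * (L x₀ * x₀ ^ (-α)) * ((N : ℝ) * Real.sqrt N) with hD
  have hLx₀ : 0 < L x₀ := hLpos x₀ hx₀0
  have hN0 : (0:ℝ) < N := by exact_mod_cast hN1
  have hDpos : 0 < D := by
    rw [hD]
    have := Real.rpow_pos_of_pos hx₀0 (-α)
    have := Real.sqrt_pos.mpr hN0
    positivity
  -- the group sum bound
  have group : ∀ k : ℕ, D * ((2:ℝ) ^ (ε:ℝ)) ^ k
      ≤ ∑ n ∈ Finset.Ico (2 ^ k * N) (2 * (2 ^ k * N)), g (n + 1) := by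
    intro k
    set ck : ℕ := 2 ^ k * N with hck
    have hck0 : 0 < ck := by positivity
    have hckN : N ≤ ck := Nat.le_mul_of_pos_left N (Nat.pow_pos (n := k) (by norm_num))
    set tk : ℝ := 2 ^ k * x₀ with htk
    have h2k1 : (1:ℝ) ≤ 2 ^ k := one_le_pow₀ one_le_two
    have h2k0 : (0:ℝ) < 2 ^ k := by positivity
    have htk0 : 0 < tk := by rw [htk]; positivity
    -- each term in the group is at least the common lower bound
    have hterm : ∀ n ∈ Finset.Ico ck (2 * ck),
        1/2 * rtail F tk * Real.sqrt ck ≤ g (n + 1) := by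
      intro n hn
      obtain ⟨hn1, hn2⟩ := Finset.mem_Ico.mp hn
      have hthr : b + (2 * (n:ℝ) + 1) * μ ≤ tk := by
        have hnlt : (n:ℝ) ≤ 2 * ck - 1 := by
          have : (n:ℝ) < 2 * ck := by exact_mod_cast hn2
          have : (n:ℝ) + 1 ≤ 2 * ck := by
            have : (n:ℕ) + 1 ≤ 2 * ck := hn2
            exact_mod_cast this
          linarith
        have hckr : (ck:ℝ) = 2 ^ k * N := by rw [hck]; push_cast; ring
        rw [htk]
        have hx₀b' : 2 ^ k * (b + 4 * N * μ) ≤ 2 ^ k * x₀ :=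
          mul_le_mul_of_nonneg_left hx₀b h2k0.le
        nlinarith [hμ.le, hb.le]
      have hhit := hit_lower (μ := μ) (b := b) P F hX hindep hdist hμ n tk hthr
        (hC n (le_trans hckN hn1))
      rw [hg]
      simp only []
      have hsq : Real.sqrt ck ≤ Real.sqrt ((n:ℝ) + 1) := by
        apply Real.sqrt_le_sqrt
        have : (ck:ℝ) ≤ (n:ℝ) := by exact_mod_cast hn1
        linarith
      have hrt0 : 0 ≤ rtail F tk := ENNReal.toReal_nonneg
      calc 1/2 * rtail F tk * Real.sqrt ck
          ≤ (P (hitAt X μ b (n+1))).toReal * Real.sqrt ((n:ℝ)+1) := by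
            apply mul_le_mul hhit hsq (Real.sqrt_nonneg _) ENNReal.toReal_nonneg
        _ = (P (hitAt X μ b (n+1))).toReal * Real.sqrt ((n+1 : ℕ):ℝ) := by push_cast; ring_nf
    have hsumge : (ck : ℝ) * (1/2 * rtail F tk * Real.sqrt ck)
        ≤ ∑ n ∈ Finset.Ico ck (2 * ck), g (n + 1) := by
      have := Finset.sum_le_sum hterm
      rw [Finset.sum_const, Nat.card_Ico] at this
      have hcard : 2 * ck - ck = ck := by omega
      rw [hcard] at this
      simpa [nsmul_eq_mul] using this
    refine le_trans ?_ hsumge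
    -- now pure algebra
    have hrt : ((2:ℝ) ^ (-ε)) ^ k * L x₀ * tk ^ (-α) ≤ rtail F tk := by
      rw [htail tk htk0, htk]
      refine mul_le_mul_of_nonneg_right (hx₁ x₀ hx₀x₁ k) ?_
      exact (Real.rpow_pos_of_pos (by rw [← htk]; exact htk0) _).le
    have hckr : (ck:ℝ) = 2 ^ k * N := by rw [hck]; push_cast; ring
    have hsqck : Real.sqrt ck = Real.sqrt (2 ^ k) * Real.sqrt N := by
      rw [hckr, Real.sqrt_mul (by positivity)]
    have htkα : tk ^ (-α) = ((2:ℝ) ^ k) ^ (-α) * x₀ ^ (-α) := by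
      rw [htk, Real.mul_rpow (by positivity) hx₀0.le]
    have pow2 : ((2:ℝ) ^ k) * ((2:ℝ) ^ (-ε)) ^ k * ((2:ℝ) ^ k) ^ (-α) * Real.sqrt (2 ^ k)
        = ((2:ℝ) ^ (ε:ℝ)) ^ k := by
      have e1 : ((2:ℝ) ^ k) = (2:ℝ) ^ ((k:ℕ):ℝ) := (Real.rpow_natCast 2 k).symm
      have e2 : ((2:ℝ) ^ (-ε)) ^ k = (2:ℝ) ^ (-ε * (k:ℝ)) := by
        rw [Real.rpow_mul (by norm_num : (0:ℝ) ≤ 2), Real.rpow_natCast]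
      have e3 : ((2:ℝ) ^ k) ^ (-α) = (2:ℝ) ^ ((k:ℝ) * (-α)) := by
        rw [e1, ← Real.rpow_mul (by norm_num : (0:ℝ) ≤ 2)]
      have e4 : Real.sqrt ((2:ℝ) ^ k) = (2:ℝ) ^ ((k:ℝ) * (1/2)) := by
        rw [Real.sqrt_eq_rpow, e1, ← Real.rpow_mul (by norm_num : (0:ℝ) ≤ 2)]
      have e5 : ((2:ℝ) ^ (ε:ℝ)) ^ k = (2:ℝ) ^ (ε * (k:ℝ)) := by
        rw [Real.rpow_mul (by norm_num : (0:ℝ) ≤ 2), Real.rpow_natCast]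
      rw [e2, e3, e4, e5, e1, ← Real.rpow_add (by norm_num : (0:ℝ) < 2),
        ← Real.rpow_add (by norm_num : (0:ℝ) < 2), ← Real.rpow_add (by norm_num : (0:ℝ) < 2)]
      congr 1
      rw [hεdef]; ring
    calc D * ((2:ℝ) ^ (ε:ℝ)) ^ k
        = (ck:ℝ) * (1/2 * (((2:ℝ) ^ (-ε)) ^ k * L x₀ * tk ^ (-α)) * Real.sqrt ck) := by
          rw [hsqck, htkα, hckr, hD, ← pow2]; ring
      _ ≤ (ck:ℝ) * (1/2 * rtail F tk * Real.sqrt ck) := by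
          refine mul_le_mul_of_nonneg_left ?_ (by positivity)
          refine mul_le_mul_of_nonneg_right ?_ (Real.sqrt_nonneg _)
          refine mul_le_mul_of_nonneg_left hrt (by norm_num)
  -- choose k large
  have hgeom : Tendsto (fun k : ℕ => D * ((2:ℝ) ^ (ε:ℝ)) ^ k) atTop atTop := by
    refine Tendsto.const_mul_atTop hDpos ?_
    apply tendsto_pow_atTop_atTop_of_one_lt
    rw [show (1:ℝ) = (2:ℝ) ^ (0:ℝ) by simp]
    exact Real.rpow_lt_rpow_left_iff (by norm_num) |>.mpr hε
  obtain ⟨k, hk⟩ := (hgeom.eventually_gt_atTop C).exists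
  refine ⟨2 * (2 ^ k * N) + 1, ?_⟩
  have reindex : ∑ n ∈ Finset.Ico (2 ^ k * N) (2 * (2 ^ k * N)), g (n + 1)
      = ∑ m ∈ Finset.Ico (2 ^ k * N + 1) (2 * (2 ^ k * N) + 1), g m := by
    rw [← Finset.map_add_right_Ico _ _ 1, Finset.sum_map]
    rfl
  have hsubset : Finset.Ico (2 ^ k * N + 1) (2 * (2 ^ k * N) + 1)
      ⊆ Finset.range (2 * (2 ^ k * N) + 1) := by
    intro m hm
    rw [Finset.mem_range]
    exact (Finset.mem_Ico.mp hm).2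
  calc C < D * ((2:ℝ) ^ (ε:ℝ)) ^ k := hk
    _ ≤ ∑ n ∈ Finset.Ico (2 ^ k * N) (2 * (2 ^ k * N)), g (n + 1) := group k
    _ = ∑ m ∈ Finset.Ico (2 ^ k * N + 1) (2 * (2 ^ k * N) + 1), g m := reindex
    _ ≤ ∑ m ∈ Finset.range (2 * (2 ^ k * N) + 1), g m :=
        Finset.sum_le_sum_of_subset_of_nonneg hsubset (fun m _ _ => hgnonneg m)

end Aux

/-- If `1 < α < 1.5`, then for all large `b`, no choice of blocks `0 = n_0 < n_1 < n_2 < ⋯`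
and randomization probabilities `(p_k)_{k≥1}` (positive, summing to one) can make the
second-moment series `Σ_k P(n_{k-1} < τ_b ≤ n_k)²/p_k` and the expected-termination-time
series `Σ_k p_k n_k` simultaneously finite. -/
theorem stmt18
    {Ω : Type*} [MeasurableSpace Ω] (P : Measure Ω) [IsProbabilityMeasure P]
    (F : Measure ℝ) [IsProbabilityMeasure F]
    (X : ℕ → Ω → ℝ) (hXmeas : ∀ i, Measurable (X i))
    (hindep : iIndepFun X P)
    (hdist : ∀ i, Measure.map (X i) P = F)
    (α : ℝ) (hα1 : 1 < α) (hα2 : α < 3 / 2)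
    (L : ℝ → ℝ) (hLpos : ∀ x > 0, 0 < L x) (hL : SlowlyVarying L)
    (htail : ∀ x > 0, rtail F x = L x * x ^ (-α))
    (hmeanInt : Integrable (fun x => x) F) (hmean : ∫ x, x ∂F = 0)
    (μ : ℝ) (hμ : 0 < μ) :
    ∃ b₀ : ℝ, ∀ b > b₀,
      ∀ n : ℕ → ℕ, n 0 = 0 → StrictMono n →
      ∀ p : ℕ → ℝ, (∀ k : ℕ, 0 < p (k + 1)) → (∑' k : ℕ, p (k + 1)) = 1 →
      ¬ (Summable (fun k : ℕ =>
            (P (blockEvent X μ b (n k) (n (k + 1)))).toReal ^ 2 / p (k + 1)) ∧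
         Summable (fun k : ℕ => p (k + 1) * (n (k + 1) : ℝ))) := by
  have hae := ae_tendsto_walk P F hXmeas hindep hdist hmeanInt hmean
  have hub : ∀ᵐ ω ∂P, ∃ j : ℕ, ∀ m : ℕ, 1 ≤ m → walk X m ω - m * μ ≤ (j : ℝ) :=
    hae.mono fun ω hω => mem_iUnion_ub hμ ω hω
  have hlb : ∀ᵐ ω ∂P, ∃ N : ℕ, ∀ m : ℕ, N ≤ m → -(μ * m) ≤ walk X m ω :=
    hae.mono fun ω hω => mem_iUnion_lb hμ ω hω
  obtain ⟨j₀, hj₀⟩ := exists_good P hXmeas hμ hub hlb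
  refine ⟨(j₀ : ℝ), fun b hb n h0 hmono p hp hpsum => ?_⟩
  rintro ⟨h1, h2⟩
  have hb0 : 0 < b := lt_of_le_of_lt (Nat.cast_nonneg j₀) hb
  obtain ⟨N, hN1, hC⟩ := hj₀ b hb
  obtain ⟨C, hupper⟩ := upper_bound P hXmeas n h0 hmono p hp h1 h2
  obtain ⟨K, hK⟩ := lower_unbounded P F hXmeas hindep hdist hα2 L hLpos hL htail
    hμ hb0 N hN1 hC C
  exact absurd (hupper K) (not_le.mpr hK)
end
end
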